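/- arXiv:1412.6176 — 4 statements merged into one kernel-verified Lean document; each statement's English description precedes it below -/
import Mathlib

section
/- Let P be a finite 2-group acting on a finite abelian 2-group M, and let Q = P ≀ C_2 = (P × P) ⋊ C_2 act naturally on M² = M ⊕ M (the two copies of P acting coordinatewise and the generator of C_2 swapping the two coordinates). Then: (1) if [P,M] has index 2 in M, then M² ⊋ [Q,M²] ⊋ [Q,[Q,M²]] = [P,M] × [P,M]; (2) if the action of P on M is uniserial, then the action of Q on M² is uniserial. -/
/-- The automorphism of `Q^p = (ZMod p → Q)` cyclically shifting coordinates by `c`. -/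
def shiftAut (p : ℕ) (Q : Type) [Group Q] (c : ZMod p) : MulAut (ZMod p → Q) where
  toFun x := fun i => x (i - c)
  invFun x := fun i => x (i + c)
  left_inv x := by funext i; simp
  right_inv x := by funext i; simp
  map_mul' x y := rfl

/-- The action of the cyclic group `C_p` on `Q^p` by cyclic coordinate shifts. -/
def shiftHom (p : ℕ) (Q : Type) [Group Q] :
    Multiplicative (ZMod p) →* MulAut (ZMod p → Q) :=
  MonoidHom.mk' (fun c => shiftAut p Q c.toAdd) (by
    intro a b
    apply MulEquiv.ext
    intro x
    funext i
    show x (i - (a * b).toAdd) = x (i - a.toAdd - b.toAdd)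
    rw [sub_sub]
    rfl)

/-- The wreath product `Q ≀ C_p` with base group `B = Q^p`, where a generator of
`C_p` cyclically permutes the `p` factors of `B`. -/
abbrev WreathCp (p : ℕ) (Q : Type) [Group Q] :=
  SemidirectProduct (ZMod p → Q) (Multiplicative (ZMod p)) (shiftHom p Q)


/-- For `ρ` an action of `G` on an abelian group `A` by automorphisms and `N ≤ A`,
the subgroup `[G, N]` generated by all `(g • m) * m⁻¹` with `g ∈ G`, `m ∈ N`. -/
def commSub {G A : Type} [Group G] [CommGroup A] (ρ : G →* MulAut A)
    (N : Subgroup A) : Subgroup A :=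
  Subgroup.closure {x | ∃ g : G, ∃ m ∈ N, x = ρ g m * m⁻¹}

/-- An action `ρ` of `G` on an abelian group `A` is uniserial if `[G, N]` has index
`p` in `N` for every nontrivial `G`-invariant subgroup `N` of `A`. -/
def IsUniserialMul (p : ℕ) {G A : Type} [Group G] [CommGroup A]
    (ρ : G →* MulAut A) : Prop :=
  ∀ N : Subgroup A, N ≠ ⊥ → (∀ g : G, N.map (ρ g).toMonoidHom = N) →
    (commSub ρ N).relIndex N = p

/-- The coordinatewise action of the base group `P × P = (ZMod 2 → P)` on
`M² = (ZMod 2 → M)`. -/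
def baseAct {P M : Type} [Group P] [CommGroup M] (φ : P →* MulAut M) :
    (ZMod 2 → P) →* MulAut (ZMod 2 → M) :=
  MonoidHom.mk' (fun a => MulEquiv.piCongrRight (fun i => φ (a i))) (by
    intro a b
    apply MulEquiv.ext
    intro x
    funext i
    show φ (a i * b i) (x i) = φ (a i) (φ (b i) (x i))
    rw [map_mul]
    rfl)

/-- The natural action of the wreath product `Q = P ≀ C_2` on `M² = M ⊕ M`: the two
copies of `P` act coordinatewise and the generator of `C_2` swaps the coordinates. -/
def wreathAct (P M : Type) [Group P] [CommGroup M] (φ : P →* MulAut M) :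
    WreathCp 2 P →* MulAut (ZMod 2 → M) :=
  SemidirectProduct.lift (baseAct φ) (shiftHom 2 M) (by
    intro g
    apply MonoidHom.ext
    intro a
    apply MulEquiv.ext
    intro x
    funext i
    show φ (a (i - g.toAdd)) (x i) = φ (a (i - g.toAdd)) (x (i - g.toAdd + g.toAdd))
    rw [sub_add_cancel])

section Dev
variable {P M : Type} [Group P] [CommGroup M] (φ : P →* MulAut M)

/-- Pair constructor for `ZMod 2 → α`. -/
def pr {α : Type} (x y : α) : ZMod 2 → α := fun i => if i = 0 then x else y

@[simp] lemma pr_zero {α : Type} (x y : α) : pr x y 0 = x := rfl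
@[simp] lemma pr_one {α : Type} (x y : α) : pr x y 1 = y := rfl

lemma zmod2_cases (i : ZMod 2) : i = 0 ∨ i = 1 := by revert i; decide

lemma pr_ext {α : Type} (x : ZMod 2 → α) : x = pr (x 0) (x 1) := by
  funext i; rcases zmod2_cases i with h | h <;> subst h <;> simp

lemma pr_mul (x y x' y' : M) : pr x y * pr x' y' = pr (x * x') (y * y') := by
  funext i; rcases zmod2_cases i with h | h <;> subst h <;>
    simp [pr, Pi.mul_apply]

lemma pr_inv (x y : M) : (pr x y)⁻¹ = pr x⁻¹ y⁻¹ := by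
  funext i; rcases zmod2_cases i with h | h <;> subst h <;>
    simp [pr, Pi.inv_apply]

omit [CommGroup M] in
lemma pr_diag (z : M) : pr z z = fun _ => z := by
  funext i; rcases zmod2_cases i with h | h <;> subst h <;> simp

/-- Multiplication of the two coordinates, as a hom. -/
def mulCoord : (ZMod 2 → M) →* M where
  toFun x := x 0 * x 1
  map_one' := by simp
  map_mul' x y := by
    show (x 0 * y 0) * (x 1 * y 1) = (x 0 * x 1) * (y 0 * y 1)
    rw [mul_mul_mul_comm]

def sqSub (U : Subgroup M) : Subgroup (ZMod 2 → M) :=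
  Subgroup.pi Set.univ fun _ => U

def oddSub (U V : Subgroup M) : Subgroup (ZMod 2 → M) :=
  sqSub U ⊓ V.comap mulCoord

lemma mem_sqSub {U : Subgroup M} {x : ZMod 2 → M} :
    x ∈ sqSub U ↔ x 0 ∈ U ∧ x 1 ∈ U := by
  constructor
  · intro h; exact ⟨h 0 trivial, h 1 trivial⟩
  · rintro ⟨h0, h1⟩ i _
    rcases zmod2_cases i with h | h <;> subst h <;> assumption

lemma mem_oddSub {U V : Subgroup M} {x : ZMod 2 → M} :
    x ∈ oddSub U V ↔ (x 0 ∈ U ∧ x 1 ∈ U) ∧ x 0 * x 1 ∈ V := by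
  rw [oddSub, Subgroup.mem_inf, mem_sqSub]; rfl

lemma sqSub_top : sqSub (⊤ : Subgroup M) = ⊤ := by
  ext x; simp [mem_sqSub]

-- generic commSub lemmas
lemma mem_commSub_gen {G A : Type} [Group G] [CommGroup A] (ρ : G →* MulAut A)
    {N : Subgroup A} (g : G) {m : A} (hm : m ∈ N) :
    ρ g m * m⁻¹ ∈ commSub ρ N :=
  Subgroup.subset_closure ⟨g, m, hm, rfl⟩

lemma commSub_le_iff {G A : Type} [Group G] [CommGroup A] (ρ : G →* MulAut A)
    {N K : Subgroup A} :
    commSub ρ N ≤ K ↔ ∀ (g : G), ∀ m ∈ N, ρ g m * m⁻¹ ∈ K := by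
  rw [commSub, Subgroup.closure_le]
  constructor
  · intro h g m hm; exact h ⟨g, m, hm, rfl⟩
  · rintro h x ⟨g, m, hm, rfl⟩; exact h g m hm

lemma commSub_le_self {G A : Type} [Group G] [CommGroup A] (ρ : G →* MulAut A)
    {N : Subgroup A} (hinv : ∀ g : G, N.map (ρ g).toMonoidHom = N) :
    commSub ρ N ≤ N := by
  rw [commSub_le_iff]
  intro g m hm
  refine mul_mem ?_ (inv_mem hm)
  have : (ρ g).toMonoidHom m ∈ N.map (ρ g).toMonoidHom := Subgroup.mem_map_of_mem _ hm
  rwa [hinv g] at this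

lemma map_eq_of_le {G A : Type} [Group G] [CommGroup A] (ρ : G →* MulAut A)
    {X : Subgroup A} (h : ∀ g : G, X.map (ρ g).toMonoidHom ≤ X) :
    ∀ g : G, X.map (ρ g).toMonoidHom = X := by
  intro g
  refine le_antisymm (h g) ?_
  intro x hx
  refine ⟨ρ g⁻¹ x, h g⁻¹ ⟨x, hx, rfl⟩, ?_⟩
  show ρ g (ρ g⁻¹ x) = x
  rw [map_inv]
  exact (ρ g).apply_symm_apply x

lemma mem_of_inv {G A : Type} [Group G] [CommGroup A] (ρ : G →* MulAut A)
    {N : Subgroup A} (hinv : ∀ g : G, N.map (ρ g).toMonoidHom = N)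
    (g : G) {m : A} (hm : m ∈ N) : ρ g m ∈ N := by
  have : (ρ g).toMonoidHom m ∈ N.map (ρ g).toMonoidHom := Subgroup.mem_map_of_mem _ hm
  rwa [hinv g] at this

-- action computation
lemma rho_apply (a : ZMod 2 → P) (c : Multiplicative (ZMod 2)) (x : ZMod 2 → M)
    (i : ZMod 2) : wreathAct P M φ ⟨a, c⟩ x i = φ (a i) (x (i - c.toAdd)) := rfl

lemma rho_inl (a : ZMod 2 → P) (x : ZMod 2 → M) :
    wreathAct P M φ ⟨a, 1⟩ x = pr (φ (a 0) (x 0)) (φ (a 1) (x 1)) := by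
  funext i
  rcases zmod2_cases i with h | h <;> subst h <;> rw [rho_apply] <;>
    norm_num

lemma rho_swap (x : ZMod 2 → M) :
    wreathAct P M φ ⟨1, Multiplicative.ofAdd 1⟩ x = pr (x 1) (x 0) := by
  funext i
  rcases zmod2_cases i with h | h <;> subst h <;> rw [rho_apply]
  · rw [show (0 : ZMod 2) - (Multiplicative.ofAdd (1 : ZMod 2)).toAdd = 1 from by decide]
    simp
  · rw [show (1 : ZMod 2) - (Multiplicative.ofAdd (1 : ZMod 2)).toAdd = 0 from by decide]
    simp

lemma gen_form (g : WreathCp 2 P) (m : ZMod 2 → M) :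
    wreathAct P M φ g m * m⁻¹
      = pr (φ (g.left 0) (m 0) * (m 0)⁻¹) (φ (g.left 1) (m 1) * (m 1)⁻¹) ∨
    wreathAct P M φ g m * m⁻¹
      = pr (φ (g.left 0) (m 1) * (m 0)⁻¹) (φ (g.left 1) (m 0) * (m 1)⁻¹) := by
  rcases g with ⟨a, c⟩
  rcases (by decide : ∀ c : Multiplicative (ZMod 2), c.toAdd = 0 ∨ c.toAdd = 1) c
    with h | h
  · left
    funext i
    show φ (a i) (m (i - c.toAdd)) * (m i)⁻¹ = _
    rw [h]
    rcases zmod2_cases i with hi | hi <;> subst hi <;> simp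
  · right
    funext i
    show φ (a i) (m (i - c.toAdd)) * (m i)⁻¹ = _
    rw [h]
    rcases zmod2_cases i with hi | hi <;> subst hi <;>
      simp [show (0 : ZMod 2) - 1 = 1 by decide, show (1 : ZMod 2) - 1 = 0 by decide]

end Dev
section Dev2
variable {P M : Type} [Group P] [CommGroup M] (φ : P →* MulAut M)

lemma phi_mem {U : Subgroup M} (hU : ∀ g : P, U.map (φ g).toMonoidHom = U)
    (g : P) {u : M} (hu : u ∈ U) : φ g u ∈ U :=
  mem_of_inv φ hU g hu

/-- `pr v 1` lies in `[Q, sqSub U]` for `v ∈ [P, U]`. -/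
lemma e0_mem_sq (U : Subgroup M) {v : M} (hv : v ∈ commSub φ U) :
    pr v 1 ∈ commSub (wreathAct P M φ) (sqSub U) := by
  have key : commSub φ U ≤
      (commSub (wreathAct P M φ) (sqSub U)).comap
        (⟨⟨fun m => pr m 1, by simp [pr_ext (1 : ZMod 2 → M)]⟩,
          fun a b => by rw [pr_mul, one_mul]⟩ : M →* (ZMod 2 → M)) := by
    rw [commSub, Subgroup.closure_le]
    rintro x ⟨g, u, hu, rfl⟩
    show pr (φ g u * u⁻¹) 1 ∈ commSub (wreathAct P M φ) (sqSub U)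
    have hm : pr u 1 ∈ sqSub U :=
      mem_sqSub.mpr ⟨by simpa using hu, by rw [pr_one]; exact one_mem U⟩
    have h2 := mem_commSub_gen (wreathAct P M φ) (⟨pr g 1, 1⟩ : WreathCp 2 P) hm
    simp only [rho_inl, pr_inv, pr_mul, pr_zero, pr_one, map_one,
      MulAut.one_apply, inv_one, mul_one] at h2
    exact h2
  exact key hv

lemma swap_gen_mem {N : Subgroup (ZMod 2 → M)} {x : ZMod 2 → M} (hx : x ∈ N) :
    pr ((x 0)⁻¹ * x 1) (x 0 * (x 1)⁻¹) ∈ commSub (wreathAct P M φ) N := by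
  have := mem_commSub_gen (wreathAct P M φ)
    (⟨1, Multiplicative.ofAdd 1⟩ : WreathCp 2 P) hx
  rwa [rho_swap, show x⁻¹ = pr (x 0)⁻¹ (x 1)⁻¹ from by rw [← pr_inv, ← pr_ext],
    pr_mul, mul_comm (x 1) (x 0)⁻¹] at this

/-- Lemma A: `[Q, U × U] = {(x,y) ∈ U × U : xy ∈ [P,U]}`. -/
lemma commSub_sq (U : Subgroup M) (hU : ∀ g : P, U.map (φ g).toMonoidHom = U) :
    commSub (wreathAct P M φ) (sqSub U) = oddSub U (commSub φ U) := by
  apply le_antisymm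
  · rw [commSub_le_iff]
    intro g m hm
    obtain ⟨hm0, hm1⟩ := mem_sqSub.mp hm
    rcases gen_form φ g m with h | h <;> rw [h] <;> rw [mem_oddSub]
    · refine ⟨⟨?_, ?_⟩, ?_⟩
      · exact mul_mem (phi_mem φ hU _ hm0) (inv_mem hm0)
      · exact mul_mem (phi_mem φ hU _ hm1) (inv_mem hm1)
      · rw [pr_zero, pr_one]
        exact mul_mem (mem_commSub_gen φ _ hm0) (mem_commSub_gen φ _ hm1)
    · refine ⟨⟨?_, ?_⟩, ?_⟩
      · exact mul_mem (phi_mem φ hU _ hm1) (inv_mem hm0)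
      · exact mul_mem (phi_mem φ hU _ hm0) (inv_mem hm1)
      · rw [pr_zero, pr_one,
          show (φ (g.left 0) (m 1) * (m 0)⁻¹) * (φ (g.left 1) (m 0) * (m 1)⁻¹)
            = (φ (g.left 0) (m 1) * (m 1)⁻¹) * (φ (g.left 1) (m 0) * (m 0)⁻¹) from by
              rw [mul_mul_mul_comm, mul_comm ((m 0)⁻¹) ((m 1)⁻¹), ← mul_mul_mul_comm]]
        exact mul_mem (mem_commSub_gen φ _ hm1) (mem_commSub_gen φ _ hm0)
  · intro x hx
    obtain ⟨⟨h0, h1⟩, hprod⟩ := mem_oddSub.mp hx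
    have hx1 : pr (x 1) (1 : M) ∈ sqSub U :=
      mem_sqSub.mpr ⟨by simpa using h1, by rw [pr_one]; exact one_mem U⟩
    have hsw := swap_gen_mem φ hx1
    simp only [pr_zero, pr_one, inv_one, mul_one] at hsw
    have he0 := e0_mem_sq φ U hprod
    have hx2 : pr (x 0 * x 1) 1 * pr (x 1)⁻¹ (x 1) = x := by
      rw [pr_mul, mul_inv_cancel_right, one_mul]; exact (pr_ext x).symm
    rw [← hx2]
    exact mul_mem he0 hsw

lemma e_mem_odd (U V : Subgroup M) {v : M} (hv : v ∈ commSub φ U) :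
    pr v 1 ∈ commSub (wreathAct P M φ) (oddSub U V) ∧
    pr 1 v ∈ commSub (wreathAct P M φ) (oddSub U V) := by
  constructor
  · have key : commSub φ U ≤
        (commSub (wreathAct P M φ) (oddSub U V)).comap
          (⟨⟨fun m => pr m 1, by simp [pr_ext (1 : ZMod 2 → M)]⟩,
            fun a b => by rw [pr_mul, one_mul]⟩ : M →* (ZMod 2 → M)) := by
      rw [commSub, Subgroup.closure_le]
      rintro x ⟨g, u, hu, rfl⟩
      show pr (φ g u * u⁻¹) 1 ∈ commSub (wreathAct P M φ) (oddSub U V)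
      have hm : pr u u⁻¹ ∈ oddSub U V :=
        mem_oddSub.mpr ⟨⟨by simpa using hu, by simpa using inv_mem hu⟩,
          by rw [pr_zero, pr_one, mul_inv_cancel]; exact one_mem _⟩
      have h2 := mem_commSub_gen (wreathAct P M φ) (⟨pr g 1, 1⟩ : WreathCp 2 P) hm
      simp only [rho_inl, pr_inv, pr_mul, pr_zero, pr_one, map_one,
        MulAut.one_apply, inv_inv, inv_mul_cancel] at h2
      exact h2
    exact key hv
  · have key : commSub φ U ≤
        (commSub (wreathAct P M φ) (oddSub U V)).comap
          (⟨⟨fun m => pr 1 m, by simp [pr_ext (1 : ZMod 2 → M)]⟩,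
            fun a b => by rw [pr_mul, one_mul]⟩ : M →* (ZMod 2 → M)) := by
      rw [commSub, Subgroup.closure_le]
      rintro x ⟨g, u, hu, rfl⟩
      show pr 1 (φ g u * u⁻¹) ∈ commSub (wreathAct P M φ) (oddSub U V)
      have hm : pr u⁻¹ u ∈ oddSub U V :=
        mem_oddSub.mpr ⟨⟨by simpa using inv_mem hu, by simpa using hu⟩,
          by rw [pr_zero, pr_one, inv_mul_cancel]; exact one_mem _⟩
      have h2 := mem_commSub_gen (wreathAct P M φ) (⟨pr 1 g, 1⟩ : WreathCp 2 P) hm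
      simp only [rho_inl, pr_inv, pr_mul, pr_zero, pr_one, map_one,
        MulAut.one_apply, inv_inv, inv_mul_cancel] at h2
      exact h2
    exact key hv

/-- Lemma B: `[Q, odd U [P,U]] = [P,U] × [P,U]`, given squares of `U` lie in `[P,U]`. -/
lemma commSub_odd (U : Subgroup M) (hU : ∀ g : P, U.map (φ g).toMonoidHom = U)
    (hsq : ∀ u ∈ U, u * u ∈ commSub φ U) :
    commSub (wreathAct P M φ) (oddSub U (commSub φ U)) = sqSub (commSub φ U) := by
  apply le_antisymm
  · rw [commSub_le_iff]
    intro g m hm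
    obtain ⟨⟨hm0, hm1⟩, hprod⟩ := mem_oddSub.mp hm
    have h10 : m 1 * (m 0)⁻¹ ∈ commSub φ U := by
      have he : (m 0 * m 1) * (m 0 * m 0)⁻¹ = m 1 * (m 0)⁻¹ := by
        rw [mul_comm (m 0) (m 1)]; group
      rw [← he]
      exact mul_mem hprod (inv_mem (hsq _ hm0))
    have h01 : m 0 * (m 1)⁻¹ ∈ commSub φ U := by
      have he : (m 0 * m 1) * (m 1 * m 1)⁻¹ = m 0 * (m 1)⁻¹ := by group
      rw [← he]
      exact mul_mem hprod (inv_mem (hsq _ hm1))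
    rcases gen_form φ g m with h | h <;> rw [h] <;> rw [mem_sqSub, pr_zero, pr_one]
    · exact ⟨mem_commSub_gen φ _ hm0, mem_commSub_gen φ _ hm1⟩
    · constructor
      · have he : φ (g.left 0) (m 1) * (m 0)⁻¹
            = (φ (g.left 0) (m 1) * (m 1)⁻¹) * (m 1 * (m 0)⁻¹) := by group
        rw [he]
        exact mul_mem (mem_commSub_gen φ _ hm1) h10
      · have he : φ (g.left 1) (m 0) * (m 1)⁻¹
            = (φ (g.left 1) (m 0) * (m 0)⁻¹) * (m 0 * (m 1)⁻¹) := by group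
        rw [he]
        exact mul_mem (mem_commSub_gen φ _ hm0) h01
  · intro x hx
    obtain ⟨h0, h1⟩ := mem_sqSub.mp hx
    have ha := (e_mem_odd φ U (commSub φ U) h0).1
    have hb := (e_mem_odd φ U (commSub φ U) h1).2
    have h2 := mul_mem ha hb
    rwa [pr_mul, mul_one, one_mul, ← pr_ext] at h2

end Dev2
section Dev3
variable {P M : Type} [Group P] [CommGroup M] (φ : P →* MulAut M)

lemma top_inv : ∀ g : P, (⊤ : Subgroup M).map (φ g).toMonoidHom = ⊤ := by
  intro g
  rw [Subgroup.map_top_of_surjective _ (φ g).surjective]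

lemma part1 (hC : (commSub φ (⊤ : Subgroup M)).index = 2) :
    commSub (wreathAct P M φ) ⊤ < ⊤ ∧
    commSub (wreathAct P M φ) (commSub (wreathAct P M φ) ⊤)
      < commSub (wreathAct P M φ) ⊤ ∧
    commSub (wreathAct P M φ) (commSub (wreathAct P M φ) ⊤)
      = Subgroup.pi Set.univ (fun _ : ZMod 2 => commSub φ ⊤) := by
  set C : Subgroup M := commSub φ ⊤ with hCdef
  have hCne : C ≠ ⊤ := by
    intro h
    rw [h, Subgroup.index_top] at hC
    omega
  obtain ⟨m, hm⟩ : ∃ m : M, m ∉ C := by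
    by_contra h
    push_neg at h
    exact hCne (Subgroup.eq_top_iff' C |>.mpr h)
  have hsq : ∀ u ∈ (⊤ : Subgroup M), u * u ∈ C := by
    intro u _
    have := Subgroup.pow_index_mem C u
    rwa [hC, pow_two] at this
  have hA : commSub (wreathAct P M φ) ⊤ = oddSub ⊤ C := by
    have := commSub_sq φ ⊤ (top_inv φ)
    rwa [sqSub_top] at this
  have hB : commSub (wreathAct P M φ) (oddSub ⊤ C) = sqSub C :=
    commSub_odd φ ⊤ (top_inv φ) hsq
  refine ⟨?_, ?_, ?_⟩
  · rw [hA]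
    refine lt_of_le_of_ne le_top fun h => hm ?_
    have : pr m 1 ∈ oddSub ⊤ C := h ▸ Subgroup.mem_top _
    obtain ⟨⟨-, -⟩, hp⟩ := mem_oddSub.mp this
    rwa [pr_zero, pr_one, mul_one] at hp
  · rw [hA, hB]
    have hle : sqSub C ≤ oddSub ⊤ C := by
      intro x hx
      obtain ⟨h0, h1⟩ := mem_sqSub.mp hx
      exact mem_oddSub.mpr ⟨⟨trivial, trivial⟩, mul_mem h0 h1⟩
    refine lt_of_le_of_ne hle fun h => hm ?_
    have hmem : pr m m⁻¹ ∈ oddSub ⊤ C :=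
      mem_oddSub.mpr ⟨⟨trivial, trivial⟩,
        by rw [pr_zero, pr_one, mul_inv_cancel]; exact one_mem _⟩
    rw [← h] at hmem
    have := (mem_sqSub.mp hmem).1
    rwa [pr_zero] at this
  · rw [hA, hB]
    rfl

end Dev3
section Dev4
variable {P M : Type} [Group P] [CommGroup M] (φ : P →* MulAut M)

lemma aux1 (a b c : M) : (a * b) * (a * c)⁻¹ = b * c⁻¹ := by
  rw [mul_inv, mul_comm a b, mul_assoc, mul_inv_cancel_left]

lemma aux2 (a b : M) : (b * a⁻¹) * (a * a) = a * b := by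
  rw [mul_assoc, inv_mul_cancel_left, mul_comm]

lemma nat_aux {m n : ℕ} (h : m * n = 2) (hn : n ≠ 1) : m = 1 := by
  have hm2 : m ≤ 2 := Nat.le_of_dvd (by norm_num) ⟨n, h.symm⟩
  interval_cases m <;> omega

lemma nat_aux2 {m n : ℕ} (h : m * n = 2) : m = 1 ∨ n = 1 := by
  have hm2 : m ≤ 2 := Nat.le_of_dvd (by norm_num) ⟨n, h.symm⟩
  interval_cases m <;> omega

/-- Insertion of `M` into the first coordinate. -/
def inj0 {M : Type} [CommGroup M] : M →* (ZMod 2 → M) where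
  toFun m := pr m 1
  map_one' := by funext i; rcases zmod2_cases i with h | h <;> subst h <;> simp
  map_mul' a b := by rw [pr_mul, one_mul]

/-- The diagonal embedding of `M`. -/
def diagM {M : Type} [CommGroup M] : M →* (ZMod 2 → M) where
  toFun m := fun _ => m
  map_one' := rfl
  map_mul' _ _ := rfl

lemma classify (hUni : IsUniserialMul 2 φ) (N : Subgroup (ZMod 2 → M)) (hN : N ≠ ⊥)
    (hinv : ∀ g : WreathCp 2 P, N.map ((wreathAct P M φ) g).toMonoidHom = N) :
    ∃ X : Subgroup M, X ≠ ⊥ ∧ (∀ g : P, X.map (φ g).toMonoidHom = X) ∧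
      (N = sqSub X ∨ N = oddSub X (commSub φ X)) := by
  set X : Subgroup M := N.map (Pi.evalMonoidHom (fun _ : ZMod 2 => M) 0) with hXdef
  set Y : Subgroup M := N.comap inj0 with hYdef
  set D : Subgroup M := N.comap diagM with hDdef
  have hswapN : ∀ x ∈ N, pr (x 1) (x 0) ∈ N := by
    intro x hx
    have := mem_of_inv _ hinv (⟨1, Multiplicative.ofAdd 1⟩ : WreathCp 2 P) hx
    rwa [rho_swap] at this
  have hbase : ∀ (g h : P), ∀ x ∈ N, pr (φ g (x 0)) (φ h (x 1)) ∈ N := by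
    intro g h x hx
    have := mem_of_inv _ hinv (⟨pr g h, 1⟩ : WreathCp 2 P) hx
    rwa [rho_inl, pr_zero, pr_one] at this
  have hYmem : ∀ y : M, y ∈ Y ↔ pr y 1 ∈ N := fun y => Iff.rfl
  have hDmem : ∀ z : M, z ∈ D ↔ (fun _ => z) ∈ N := fun z => Iff.rfl
  have hXmem : ∀ x ∈ N, x 0 ∈ X := fun x hx => ⟨x, hx, rfl⟩
  have hX1 : ∀ x ∈ N, x 1 ∈ X := by
    intro x hx
    have := hXmem _ (hswapN x hx)
    rwa [pr_zero] at this
  have hY1 : ∀ y ∈ Y, pr 1 y ∈ N := by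
    intro y hy
    have := hswapN _ ((hYmem y).mp hy)
    rwa [pr_zero, pr_one] at this
  have hY1' : ∀ y : M, pr 1 y ∈ N → y ∈ Y := by
    intro y hy
    have := hswapN _ hy
    rw [pr_zero, pr_one] at this
    exact (hYmem y).mpr this
  have hXinv : ∀ g : P, X.map (φ g).toMonoidHom = X := by
    refine map_eq_of_le φ fun g => ?_
    intro v hv
    rw [Subgroup.mem_map] at hv
    obtain ⟨w, hw, rfl⟩ := hv
    obtain ⟨x, hx, rfl⟩ := Subgroup.mem_map.mp hw
    exact ⟨_, hbase g 1 x hx, rfl⟩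
  have hYleX : Y ≤ X := by
    intro y hy
    have := hXmem _ ((hYmem y).mp hy)
    rwa [pr_zero] at this
  have hCXleY : commSub φ X ≤ Y := by
    rw [commSub, Subgroup.closure_le]
    rintro v ⟨g, w, hwX, rfl⟩
    obtain ⟨x, hx, rfl⟩ := Subgroup.mem_map.mp hwX
    have h1 := hbase g 1 x hx
    have h2 := mul_mem h1 (inv_mem hx)
    have he : pr (φ g (x 0)) (φ 1 (x 1)) * x⁻¹
        = pr (φ g (x 0) * (x 0)⁻¹) 1 := by
      rw [show x⁻¹ = pr (x 0)⁻¹ (x 1)⁻¹ from by rw [← pr_inv, ← pr_ext], pr_mul]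
      simp only [map_one, MulAut.one_apply, mul_inv_cancel]
    rw [he] at h2
    exact (hYmem _).mpr h2
  have hDleX : D ≤ X := by
    intro z hz
    exact hXmem _ ((hDmem z).mp hz)
  have hYleD : Y ≤ D := by
    intro y hy
    have := mul_mem ((hYmem y).mp hy) (hY1 y hy)
    rw [pr_mul, one_mul, mul_one, pr_diag] at this
    exact (hDmem y).mpr this
  have hprodD : ∀ x ∈ N, x 0 * x 1 ∈ D := by
    intro x hx
    have h2 := mul_mem hx (hswapN x hx)
    have he : x * pr (x 1) (x 0) = fun _ => x 0 * x 1 := by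
      funext i
      rcases zmod2_cases i with h | h <;> subst h <;>
        simp [Pi.mul_apply, mul_comm]
    rw [he] at h2
    exact (hDmem _).mpr h2
  have hXbot : X ≠ ⊥ := by
    obtain ⟨a, hane⟩ := Subgroup.ne_bot_iff_exists_ne_one.mp hN
    intro hX0
    apply hane
    apply Subtype.ext
    funext i
    have h0 : (a : ZMod 2 → M) 0 = 1 := by
      have := hXmem _ a.2
      rw [hX0, Subgroup.mem_bot] at this
      exact this
    have h1 : (a : ZMod 2 → M) 1 = 1 := by
      have := hX1 _ a.2
      rw [hX0, Subgroup.mem_bot] at this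
      exact this
    rcases zmod2_cases i with h | h <;> subst h <;> assumption
  have hrel : (commSub φ X).relIndex X = 2 := hUni X hXbot hXinv
  by_cases hYX : Y = X
  · refine ⟨X, hXbot, hXinv, Or.inl ?_⟩
    ext x
    rw [mem_sqSub]
    constructor
    · intro hx
      exact ⟨hXmem x hx, hX1 x hx⟩
    · rintro ⟨h0, h1⟩
      rw [← hYX] at h0 h1
      have h2 := mul_mem ((hYmem _).mp h0) (hY1 _ h1)
      rwa [pr_mul, mul_one, one_mul, ← pr_ext] at h2
  · have hsqX : ∀ u ∈ X, u * u ∈ commSub φ X := by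
      intro u hu
      have h2 : ((commSub φ X).subgroupOf X).index = 2 := hrel
      have h3 := Subgroup.pow_index_mem ((commSub φ X).subgroupOf X) (⟨u, hu⟩ : X)
      rw [h2, pow_two] at h3
      exact Subgroup.mem_subgroupOf.mp h3
    have hrel2 : (commSub φ X).relIndex Y * Y.relIndex X = 2 := by
      rw [Subgroup.relIndex_mul_relIndex _ _ _ hCXleY hYleX, hrel]
    have hYX1 : Y.relIndex X ≠ 1 :=
      fun h => hYX (le_antisymm hYleX (Subgroup.relIndex_eq_one.mp h))
    have hVY : commSub φ X = Y :=
      le_antisymm hCXleY (Subgroup.relIndex_eq_one.mp (nat_aux hrel2 hYX1))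
    have hYXrel : Y.relIndex X = 2 := by rw [← hVY]; exact hrel
    have hrelD : Y.relIndex D * D.relIndex X = 2 := by
      rw [Subgroup.relIndex_mul_relIndex _ _ _ hYleD hDleX]; exact hYXrel
    refine ⟨X, hXbot, hXinv, Or.inr ?_⟩
    rw [hVY]
    rcases nat_aux2 hrelD with h | h
    · -- D = Y
      have hDY : D = Y := le_antisymm (Subgroup.relIndex_eq_one.mp h) hYleD
      ext x
      rw [mem_oddSub]
      constructor
      · intro hx
        refine ⟨⟨hXmem x hx, hX1 x hx⟩, ?_⟩
        have := hprodD x hx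
        rwa [hDY] at this
      · rintro ⟨⟨h0, h1⟩, hp⟩
        obtain ⟨w, hw, hw0⟩ := Subgroup.mem_map.mp h0
        have hw0' : w 0 = x 0 := hw0
        have hwD := hprodD w hw
        rw [hDY] at hwD
        have hyd : x 1 * (w 1)⁻¹ ∈ Y := by
          have he : (x 0 * x 1) * (w 0 * w 1)⁻¹ = x 1 * (w 1)⁻¹ := by
            rw [← hw0']; exact aux1 _ _ _
          rw [← he]
          exact mul_mem hp (inv_mem hwD)
        have h2 := mul_mem hw (hY1 _ hyd)
        have he2 : w * pr 1 (x 1 * (w 1)⁻¹) = x := by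
          funext i
          rcases zmod2_cases i with hi | hi <;> subst hi
          · show w 0 * 1 = x 0
            rw [mul_one, hw0']
          · show w 1 * (x 1 * (w 1)⁻¹) = x 1
            rw [mul_comm (x 1), mul_inv_cancel_left]
        rwa [he2] at h2
    · -- D = X
      have hDX : D = X := le_antisymm hDleX (Subgroup.relIndex_eq_one.mp h)
      have hsqY : ∀ u ∈ X, u * u ∈ Y := fun u hu => hVY ▸ hsqX u hu
      ext x
      rw [mem_oddSub]
      constructor
      · intro hx
        refine ⟨⟨hXmem x hx, hX1 x hx⟩, ?_⟩
        have hxD : (fun _ => x 0) ∈ N := (hDmem _).mp (hDX ▸ hXmem x hx)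
        have h2 := mul_mem hx (inv_mem hxD)
        have he : x * (fun _ => x 0)⁻¹ = pr 1 (x 1 * (x 0)⁻¹) := by
          funext i
          rcases zmod2_cases i with hi | hi <;> subst hi
          · show x 0 * (x 0)⁻¹ = 1
            exact mul_inv_cancel _
          · rfl
        rw [he] at h2
        have h3 : x 1 * (x 0)⁻¹ ∈ Y := hY1' _ h2
        have he2 : (x 1 * (x 0)⁻¹) * (x 0 * x 0) = x 0 * x 1 := aux2 _ _
        rw [← he2]
        exact mul_mem h3 (hsqY _ (hXmem x hx))
      · rintro ⟨⟨h0, h1⟩, hp⟩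
        have hxD : (fun _ => x 0) ∈ N := (hDmem _).mp (hDX ▸ h0)
        have h3 : x 1 * (x 0)⁻¹ ∈ Y := by
          rw [← aux1 (x 0) (x 1) (x 0)]
          exact mul_mem hp (inv_mem (hsqY _ h0))
        have h2 := mul_mem hxD (hY1 _ h3)
        have he : (fun _ => x 0) * pr 1 (x 1 * (x 0)⁻¹) = x := by
          funext i
          rcases zmod2_cases i with hi | hi <;> subst hi
          · show x 0 * 1 = x 0
            exact mul_one _
          · show x 0 * (x 1 * (x 0)⁻¹) = x 1
            rw [mul_comm (x 1), mul_inv_cancel_left]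
        rwa [he] at h2

end Dev4
section Dev5
variable {P M : Type} [Group P] [CommGroup M] (φ : P →* MulAut M)

lemma relindex_sq (X : Subgroup M) (hrel : (commSub φ X).relIndex X = 2) :
    (oddSub X (commSub φ X)).relIndex (sqSub X) = 2 := by
  set V := commSub φ X with hVdef
  have h2 : ((V.subgroupOf X)).index = 2 := hrel
  rw [Subgroup.index_eq_two_iff] at h2
  obtain ⟨a, ha⟩ := h2
  show ((oddSub X V).subgroupOf (sqSub X)).index = 2
  rw [Subgroup.index_eq_two_iff]
  have haX : (a : M) ∈ X := a.2
  refine ⟨⟨pr (a : M) 1,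
    mem_sqSub.mpr ⟨by simpa using haX, by rw [pr_one]; exact one_mem X⟩⟩, ?_⟩
  intro b
  have hb0 : (b : ZMod 2 → M) 0 ∈ X := (mem_sqSub.mp b.2).1
  have hb1 : (b : ZMod 2 → M) 1 ∈ X := (mem_sqSub.mp b.2).2
  have key := ha ⟨(b : ZMod 2 → M) 0 * (b : ZMod 2 → M) 1, mul_mem hb0 hb1⟩
  rw [Subgroup.mem_subgroupOf, Subgroup.mem_subgroupOf] at key
  rw [Subgroup.mem_subgroupOf, Subgroup.mem_subgroupOf]
  have hiff1 : ((b : ZMod 2 → M) * pr (a : M) 1 ∈ oddSub X V) ↔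
      ((b : ZMod 2 → M) 0 * (b : ZMod 2 → M) 1) * (a : M) ∈ V := by
    rw [mem_oddSub]
    constructor
    · rintro ⟨-, hp⟩
      rwa [Pi.mul_apply, Pi.mul_apply, pr_zero, pr_one, mul_one,
        mul_right_comm] at hp
    · intro hp
      refine ⟨⟨?_, ?_⟩, ?_⟩
      · show (b : ZMod 2 → M) 0 * pr (a : M) 1 0 ∈ X
        rw [pr_zero]; exact mul_mem hb0 haX
      · show (b : ZMod 2 → M) 1 * pr (a : M) 1 1 ∈ X
        rw [pr_one]; exact mul_mem hb1 (one_mem X)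
      · show ((b : ZMod 2 → M) 0 * pr (a : M) 1 0)
            * ((b : ZMod 2 → M) 1 * pr (a : M) 1 1) ∈ V
        rw [pr_zero, pr_one, mul_one, mul_right_comm]
        exact hp
  have hiff2 : ((b : ZMod 2 → M) ∈ oddSub X V) ↔
      (b : ZMod 2 → M) 0 * (b : ZMod 2 → M) 1 ∈ V := by
    rw [mem_oddSub]
    exact ⟨fun h => h.2, fun h => ⟨⟨hb0, hb1⟩, h⟩⟩
  rw [show ((b * ⟨pr (a : M) 1, _⟩ : ↥(sqSub X)) : ZMod 2 → M)
      = (b : ZMod 2 → M) * pr (a : M) 1 from rfl]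
  rw [hiff1, hiff2]
  exact key

lemma relindex_odd (X : Subgroup M) (hrel : (commSub φ X).relIndex X = 2) :
    (sqSub (commSub φ X)).relIndex (oddSub X (commSub φ X)) = 2 := by
  set V := commSub φ X with hVdef
  have h2 : ((V.subgroupOf X)).index = 2 := hrel
  rw [Subgroup.index_eq_two_iff] at h2
  obtain ⟨a, ha⟩ := h2
  show ((sqSub V).subgroupOf (oddSub X V)).index = 2
  rw [Subgroup.index_eq_two_iff]
  have haX : (a : M) ∈ X := a.2
  refine ⟨⟨pr (a : M) (a : M)⁻¹,
    mem_oddSub.mpr ⟨⟨by simpa using haX, by simpa using inv_mem haX⟩,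
      by rw [pr_zero, pr_one, mul_inv_cancel]; exact one_mem _⟩⟩, ?_⟩
  intro b
  obtain ⟨⟨hb0, hb1⟩, hbp⟩ := mem_oddSub.mp b.2
  have key := ha ⟨(b : ZMod 2 → M) 0, hb0⟩
  rw [Subgroup.mem_subgroupOf, Subgroup.mem_subgroupOf] at key
  rw [Subgroup.mem_subgroupOf, Subgroup.mem_subgroupOf]
  have hiff1 : ((b : ZMod 2 → M) * pr (a : M) (a : M)⁻¹ ∈ sqSub V) ↔
      (b : ZMod 2 → M) 0 * (a : M) ∈ V := by
    rw [mem_sqSub]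
    constructor
    · intro h
      have := h.1
      rwa [Pi.mul_apply, pr_zero] at this
    · intro h
      constructor
      · show (b : ZMod 2 → M) 0 * pr (a : M) (a : M)⁻¹ 0 ∈ V
        rw [pr_zero]; exact h
      · show (b : ZMod 2 → M) 1 * pr (a : M) (a : M)⁻¹ 1 ∈ V
        rw [pr_one, ← aux1 ((b : ZMod 2 → M) 0) ((b : ZMod 2 → M) 1) (a : M)]
        exact mul_mem hbp (inv_mem h)
  have hiff2 : ((b : ZMod 2 → M) ∈ sqSub V) ↔ (b : ZMod 2 → M) 0 ∈ V := by
    rw [mem_sqSub]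
    constructor
    · exact fun h => h.1
    · intro h
      refine ⟨h, ?_⟩
      rw [show (b : ZMod 2 → M) 1
          = ((b : ZMod 2 → M) 0)⁻¹ * ((b : ZMod 2 → M) 0 * (b : ZMod 2 → M) 1)
          from by rw [inv_mul_cancel_left]]
      exact mul_mem (inv_mem h) hbp
  rw [show ((b * ⟨pr (a : M) (a : M)⁻¹, _⟩ : ↥(oddSub X V)) : ZMod 2 → M)
      = (b : ZMod 2 → M) * pr (a : M) (a : M)⁻¹ from rfl]
  rw [hiff1, hiff2]
  exact key

end Dev5

/-- Let `P` be a finite `2`-group acting on the finite abelian `2`-group `M`, and let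
`Q = P ≀ C_2` act naturally on `M²`.  Then: (1) if `[P,M]` has index `2` in `M`, then
`M² > [Q,M²] > [Q,[Q,M²]] = [P,M] × [P,M]`; (2) if the action of `P` on `M` is
uniserial, then so is the action of `Q` on `M²`. -/
theorem wreath_action_uniserial (P M : Type) [Group P] [Finite P]
    (hP : IsPGroup 2 P) [CommGroup M] [Finite M] (hM : IsPGroup 2 M)
    (φ : P →* MulAut M) :
    ((commSub φ (⊤ : Subgroup M)).index = 2 →
      commSub (wreathAct P M φ) ⊤ < ⊤ ∧
      commSub (wreathAct P M φ) (commSub (wreathAct P M φ) ⊤)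
        < commSub (wreathAct P M φ) ⊤ ∧
      commSub (wreathAct P M φ) (commSub (wreathAct P M φ) ⊤)
        = Subgroup.pi Set.univ (fun _ : ZMod 2 => commSub φ ⊤)) ∧
    (IsUniserialMul 2 φ → IsUniserialMul 2 (wreathAct P M φ)) := by
  constructor
  · exact part1 φ
  · intro hUni N hN hinv
    obtain ⟨X, hXbot, hXinv, hcase | hcase⟩ := classify φ hUni N hN hinv
    · rw [hcase, commSub_sq φ X hXinv]
      exact relindex_sq φ X (hUni X hXbot hXinv)
    · have hrel := hUni X hXbot hXinv
      have hsqX : ∀ u ∈ X, u * u ∈ commSub φ X := by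
        intro u hu
        have h2 : (((commSub φ X).subgroupOf X)).index = 2 := hrel
        have h3 := Subgroup.pow_index_mem ((commSub φ X).subgroupOf X) (⟨u, hu⟩ : X)
        rw [h2, pow_two] at h3
        exact Subgroup.mem_subgroupOf.mp h3
      rw [hcase, commSub_odd φ X hXinv hsqX]
      exact relindex_odd φ X hrel
end

section
/- Let p be a prime and n ≥ 1. The natural permutation action of P_n on the F_p-vector space with basis F_p^n (that is, the module (F_p)^{p^n} on which P_n ≤ Sym(F_p^n) acts by permuting coordinates) is uniserial of length p^n. -/
variable (p n : ℕ)

/-- The underlying function of the generator `σ_i`. -/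
def sigmaFun (i : Fin n) (lam : Fin n → ZMod p) : Fin n → ZMod p :=
  fun k => if k = i ∧ ∀ j : Fin n, j < i → lam j = 0 then lam k + 1 else lam k

lemma sigmaFun_apply_ne (i : Fin n) (lam : Fin n → ZMod p) {k : Fin n} (h : k ≠ i) :
    sigmaFun p n i lam k = lam k := by
  simp [sigmaFun, h]

/-- The inverse function of `σ_i`. -/
def sigmaInvFun (i : Fin n) (lam : Fin n → ZMod p) : Fin n → ZMod p :=
  fun k => if k = i ∧ ∀ j : Fin n, j < i → lam j = 0 then lam k - 1 else lam k

lemma sigmaInvFun_apply_ne (i : Fin n) (lam : Fin n → ZMod p) {k : Fin n} (h : k ≠ i) :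
    sigmaInvFun p n i lam k = lam k := by
  simp [sigmaInvFun, h]

lemma sigmaFun_cond (i : Fin n) (lam : Fin n → ZMod p) :
    (∀ j : Fin n, j < i → sigmaFun p n i lam j = 0) ↔ (∀ j : Fin n, j < i → lam j = 0) := by
  constructor
  · intro h j hj
    have := h j hj
    rwa [sigmaFun_apply_ne p n i lam (ne_of_lt hj)] at this
  · intro h j hj
    rw [sigmaFun_apply_ne p n i lam (ne_of_lt hj)]
    exact h j hj

lemma sigmaInvFun_cond (i : Fin n) (lam : Fin n → ZMod p) :
    (∀ j : Fin n, j < i → sigmaInvFun p n i lam j = 0) ↔ (∀ j : Fin n, j < i → lam j = 0) := by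
  constructor
  · intro h j hj
    have := h j hj
    rwa [sigmaInvFun_apply_ne p n i lam (ne_of_lt hj)] at this
  · intro h j hj
    rw [sigmaInvFun_apply_ne p n i lam (ne_of_lt hj)]
    exact h j hj

/-- The generator `σ_i` of the Sylow `p`-subgroup of `Sym(F_p^n)`: it fixes
`(λ_0, …, λ_{n-1})` if `λ_j ≠ 0` for some `j < i`, and otherwise replaces the entry
`λ_i` by `λ_i + 1`. -/
def sigmaPerm (i : Fin n) : Equiv.Perm (Fin n → ZMod p) where
  toFun := sigmaFun p n i
  invFun := sigmaInvFun p n i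
  left_inv := by
    intro lam
    funext k
    by_cases hk : k = i
    · subst hk
      show sigmaInvFun p n k (sigmaFun p n k lam) k = lam k
      by_cases hc : ∀ j : Fin n, j < k → lam j = 0
      · have hC : ∀ j : Fin n, j < k → sigmaFun p n k lam j = 0 :=
          (sigmaFun_cond p n k lam).mpr hc
        unfold sigmaInvFun
        rw [if_pos ⟨rfl, hC⟩]
        unfold sigmaFun
        rw [if_pos ⟨rfl, hc⟩]
        ring
      · have hC : ¬ ∀ j : Fin n, j < k → sigmaFun p n k lam j = 0 :=
          fun h => hc ((sigmaFun_cond p n k lam).mp h)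
        unfold sigmaInvFun
        rw [if_neg (by tauto)]
        unfold sigmaFun
        rw [if_neg (by tauto)]
    · exact (sigmaInvFun_apply_ne p n i _ hk).trans (sigmaFun_apply_ne p n i lam hk)
  right_inv := by
    intro lam
    funext k
    by_cases hk : k = i
    · subst hk
      show sigmaFun p n k (sigmaInvFun p n k lam) k = lam k
      by_cases hc : ∀ j : Fin n, j < k → lam j = 0
      · have hC : ∀ j : Fin n, j < k → sigmaInvFun p n k lam j = 0 :=
          (sigmaInvFun_cond p n k lam).mpr hc
        unfold sigmaFun
        rw [if_pos ⟨rfl, hC⟩]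
        unfold sigmaInvFun
        rw [if_pos ⟨rfl, hc⟩]
        ring
      · have hC : ¬ ∀ j : Fin n, j < k → sigmaInvFun p n k lam j = 0 :=
          fun h => hc ((sigmaInvFun_cond p n k lam).mp h)
        unfold sigmaFun
        rw [if_neg (by tauto)]
        unfold sigmaInvFun
        rw [if_neg (by tauto)]
    · exact (sigmaFun_apply_ne p n i _ hk).trans (sigmaInvFun_apply_ne p n i lam hk)

/-- `P_n = ⟨σ_0, …, σ_{n-1}⟩`, a Sylow `p`-subgroup of `Sym(F_p^n)`. -/
def PSyl : Subgroup (Equiv.Perm (Fin n → ZMod p)) :=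
  Subgroup.closure (Set.range (sigmaPerm p n))


/-- The additive automorphism of the permutation module `(F_p)^{F_p^n}` induced by a
permutation `g` of `F_p^n` (permutation of coordinates). -/
def permAddAut (g : Equiv.Perm (Fin n → ZMod p)) :
    AddAut ((Fin n → ZMod p) → ZMod p) where
  toFun f := f ∘ g.symm
  invFun f := f ∘ g
  left_inv f := by funext x; simp
  right_inv f := by funext x; simp
  map_add' f₁ f₂ := rfl


namespace UPM

open Finset

/-- base-`p` digit `l` of `k` -/
def dgt (p k l : ℕ) : ℕ := k / p ^ l % p

lemma dgt_lt {p : ℕ} (hp : 1 < p) (k l : ℕ) : dgt p k l < p := Nat.mod_lt _ (by omega)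

lemma sum_pow_lt {p : ℕ} (hp : 1 < p) (a : ℕ → ℕ) (ha : ∀ j, a j < p) (m : ℕ) :
    ∑ j ∈ range m, a j * p ^ j < p ^ m := by
  induction m with
  | zero => simp
  | succ m ih =>
    rw [Finset.sum_range_succ, pow_succ]
    have h1 := ha m
    have h2 : a m * p ^ m ≤ (p - 1) * p ^ m := Nat.mul_le_mul_right _ (by omega)
    have h3 : 0 < p ^ m := pow_pos (by omega) m
    nlinarith

lemma dgt_sum {p : ℕ} (hp : 1 < p) (a : ℕ → ℕ) (ha : ∀ j, a j < p) (m l : ℕ) (hl : l < m) :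
    dgt p (∑ j ∈ range m, a j * p ^ j) l = a l := by
  induction m with
  | zero => omega
  | succ m ih =>
    rw [Finset.sum_range_succ]
    rcases lt_or_ge l m with h | h
    · have hpl : 0 < p ^ l := pow_pos (by omega) l
      have e1 : a m * p ^ m = a m * p ^ (m - l - 1) * p * p ^ l := by
        rw [mul_assoc, mul_assoc, ← pow_succ', ← pow_add]
        congr 2
        omega
      rw [e1, dgt, Nat.add_mul_div_right _ _ hpl, Nat.add_mul_mod_self_right]
      exact ih h
    · have : l = m := by omega
      subst this
      rw [dgt, Nat.add_mul_div_right _ _ (pow_pos (by omega) l),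
        Nat.div_eq_of_lt (sum_pow_lt hp a ha l), zero_add, Nat.mod_eq_of_lt (ha l)]

lemma sum_dgt {p : ℕ} (hp : 1 < p) (m : ℕ) : ∀ v : ℕ, v < p ^ m →
    ∑ l ∈ range m, dgt p v l * p ^ l = v := by
  induction m with
  | zero => intro v hv; simp at hv ⊢; omega
  | succ m ih =>
    intro v hv
    rw [Finset.sum_range_succ']
    have h0 : dgt p v 0 * p ^ 0 = v % p := by simp [dgt]
    have hstep : ∀ l : ℕ, dgt p v (l + 1) = dgt p (v / p) l := by
      intro l
      simp only [dgt, Nat.div_div_eq_div_mul, pow_succ']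
    have : ∀ l ∈ range m, dgt p v (l + 1) * p ^ (l + 1) = dgt p (v / p) l * p ^ l * p := by
      intro l _
      rw [hstep, pow_succ, mul_assoc]
    rw [Finset.sum_congr rfl this, ← Finset.sum_mul, ih (v / p) (by
      rw [Nat.div_lt_iff_lt_mul (by omega)]
      calc v < p ^ (m + 1) := hv
        _ = p ^ m * p := pow_succ p m), h0]
    rw [mul_comm]
    exact Nat.div_add_mod v p

lemma geo_sum {p : ℕ} (hp : 1 < p) (m : ℕ) :
    ∑ l ∈ range m, (p - 1) * p ^ l = p ^ m - 1 := by
  induction m with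
  | zero => simp
  | succ m ih =>
    rw [Finset.sum_range_succ, ih, pow_succ]
    have h3 : 0 < p ^ m := pow_pos (by omega) m
    have h4 : (p - 1) * p ^ m = p ^ m * p - p ^ m := by
      rw [Nat.sub_mul, one_mul, mul_comm]
    have h5 : p ^ m ≤ p ^ m * p := Nat.le_mul_of_pos_right _ (by omega)
    omega

variable (p n : ℕ)

/-- coordinates of `μ`, as natural numbers indexed by `ℕ` -/
def vals (μ : Fin n → ZMod p) (j : ℕ) : ℕ :=
  if h : j < n then (μ ⟨j, h⟩).val else 0

/-- the number whose base-`p` digits are the coordinates of `μ` -/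
def val (μ : Fin n → ZMod p) : ℕ := ∑ j ∈ range n, vals p n μ j * p ^ j

variable {p n}

lemma vals_lt (hp : 1 < p) (μ : Fin n → ZMod p) (j : ℕ) : vals p n μ j < p := by
  haveI : NeZero p := ⟨by omega⟩
  unfold vals
  split
  · exact ZMod.val_lt _
  · omega

lemma val_lt (hp : 1 < p) (μ : Fin n → ZMod p) : val p n μ < p ^ n :=
  sum_pow_lt hp _ (vals_lt hp μ) n

lemma val_dgt (hp : 1 < p) (μ : Fin n → ZMod p) (l : ℕ) (hl : l < n) :
    dgt p (val p n μ) l = vals p n μ l :=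
  dgt_sum hp _ (vals_lt hp μ) n l hl

lemma vals_eq (hp : 1 < p) (μ : Fin n → ZMod p) (l : Fin n) :
    vals p n μ (l : ℕ) = (μ l).val := by
  unfold vals
  rw [dif_pos l.isLt]

lemma val_inj (hp : 1 < p) {μ ν : Fin n → ZMod p} (h : val p n μ = val p n ν) : μ = ν := by
  haveI : NeZero p := ⟨by omega⟩
  funext l
  have h1 : (μ l).val = (ν l).val := by
    rw [← vals_eq hp μ l, ← vals_eq hp ν l, ← val_dgt hp μ l l.isLt, ← val_dgt hp ν l l.isLt, h]
  have := ZMod.val_injective p h1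
  exact this

variable (p n)

/-- the `k`-th binomial functional on the permutation module -/
def phi [NeZero p] (k : ℕ) : ((Fin n → ZMod p) → ZMod p) →+ ZMod p where
  toFun f := ∑ μ, f μ * (Nat.choose (val p n μ) k : ZMod p)
  map_zero' := by simp
  map_add' f g := by
    rw [← Finset.sum_add_distrib]
    exact Finset.sum_congr rfl fun x _ => add_mul _ _ _

variable {p n}

lemma phi_apply [NeZero p] (k : ℕ) (f : (Fin n → ZMod p) → ZMod p) :
    phi p n k f = ∑ μ, f μ * (Nat.choose (val p n μ) k : ZMod p) := rfl

lemma phi_nondeg [NeZero p] (hp : 1 < p) (f : (Fin n → ZMod p) → ZMod p)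
    (h : ∀ j < p ^ n, phi p n j f = 0) : f = 0 := by
  have key : ∀ t : ℕ, ∀ μ : Fin n → ZMod p, p ^ n ≤ val p n μ + t → f μ = 0 := by
    intro t
    induction t with
    | zero =>
      intro μ hμ
      exact absurd (val_lt hp μ) (by omega)
    | succ t ih =>
      intro μ hμ
      have h0 := h (val p n μ) (val_lt hp μ)
      rw [phi_apply] at h0
      rw [Finset.sum_eq_single_of_mem μ (Finset.mem_univ μ)] at h0
      · rwa [Nat.choose_self, Nat.cast_one, mul_one] at h0
      · intro ν _ hνμ
        rcases lt_trichotomy (val p n ν) (val p n μ) with hc | hc | hc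
        · rw [Nat.choose_eq_zero_of_lt hc, Nat.cast_zero, mul_zero]
        · exact absurd (val_inj hp hc) hνμ
        · rw [ih ν (by omega), zero_mul]
  funext μ
  have := key (p ^ n) μ (by omega)
  simpa using this


lemma sum_range_mul_decomp {M : Type*} [AddCommMonoid M] (f : ℕ → M) (q B : ℕ) :
    ∑ a ∈ range (q * B), f a = ∑ b ∈ range B, ∑ c ∈ range q, f (c + q * b) := by
  induction B with
  | zero => simp
  | succ B ih =>
    rw [Nat.mul_succ, Finset.sum_range_add, ih, Finset.sum_range_succ]
    congr 1
    exact Finset.sum_congr rfl fun c _ => by rw [add_comm (q * B) c]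

lemma sumfact {p : ℕ} (hp : 1 < p) (i : ℕ) (F : ℕ → ℕ → ZMod p) :
    ∑ a ∈ range (p ^ i), ∏ l ∈ range i, F l (dgt p a l)
      = ∏ l ∈ range i, ∑ c ∈ range p, F l c := by
  induction i generalizing F with
  | zero => simp
  | succ i ih =>
    rw [pow_succ', sum_range_mul_decomp]
    have key : ∀ b ∈ range (p ^ i), ∑ c ∈ range p, ∏ l ∈ range (i + 1), F l (dgt p (c + p * b) l)
        = (∑ c ∈ range p, F 0 c) * ∏ l ∈ range i, F (l + 1) (dgt p b l) := by
      intro b _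
      rw [Finset.sum_mul]
      refine Finset.sum_congr rfl fun c hc => ?_
      rw [Finset.prod_range_succ']
      have hc' : c < p := Finset.mem_range.mp hc
      have h0 : dgt p (c + p * b) 0 = c := by
        simp [dgt, Nat.add_mul_mod_self_left, Nat.mod_eq_of_lt hc']
      have hs : ∀ l : ℕ, dgt p (c + p * b) (l + 1) = dgt p b l := by
        intro l
        unfold dgt
        rw [pow_succ', ← Nat.div_div_eq_div_mul, Nat.add_mul_div_left _ _ (by omega : 0 < p),
          Nat.div_eq_of_lt hc', zero_add]
      rw [h0, mul_comm]
      congr 1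
      exact Finset.prod_congr rfl fun l _ => by rw [hs]
    rw [Finset.sum_congr rfl key, ← Finset.mul_sum, ih (fun l => F (l + 1)),
      Finset.prod_range_succ', mul_comm]

lemma alt_sum {p : ℕ} (hp : 1 < p) (m : ℕ) (hm : m < p) :
    ∑ c ∈ range p, (-1 : ZMod p) ^ c * (Nat.choose m c : ZMod p)
      = if m = 0 then 1 else 0 := by
  have hsplit : ∑ c ∈ range p, (-1 : ZMod p) ^ c * (Nat.choose m c : ZMod p)
      = ∑ c ∈ range (m + 1), (-1 : ZMod p) ^ c * (Nat.choose m c : ZMod p) := by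
    rw [← Finset.sum_range_add_sum_Ico _ (by omega : m + 1 ≤ p)]
    have : ∀ c ∈ Finset.Ico (m + 1) p, (-1 : ZMod p) ^ c * (Nat.choose m c : ZMod p) = 0 := by
      intro c hc
      rw [Nat.choose_eq_zero_of_lt (by exact Nat.lt_of_succ_le (Finset.mem_Ico.mp hc).1),
        Nat.cast_zero, mul_zero]
    rw [Finset.sum_congr rfl this, Finset.sum_const, smul_zero, add_zero]
  rw [hsplit]
  have := Int.alternating_sum_range_choose (n := m)
  calc ∑ c ∈ range (m + 1), (-1 : ZMod p) ^ c * (Nat.choose m c : ZMod p)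
      = ((∑ c ∈ range (m + 1), (-1 : ℤ) ^ c * (Nat.choose m c : ℤ) : ℤ) : ZMod p) := by
        push_cast
        rfl
    _ = if m = 0 then 1 else 0 := by
        rw [this]
        split <;> simp

lemma cval_eq_cd {p : ℕ} (hp : p.Prime) {n : ℕ} (k : ℕ) (hk : k < p ^ n)
    (v : ℕ) (hv : v < p ^ n) :
    ((Nat.choose v k : ℕ) : ZMod p)
      = ∏ l ∈ range n, ((Nat.choose (dgt p v l) (dgt p k l) : ℕ) : ZMod p) := by
  haveI : Fact p.Prime := ⟨hp⟩
  have h := Choose.choose_modEq_choose_mul_prod_range_choose (p := p) (n := v) (k := k) n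
  have h2 : ((Nat.choose v k : ℤ) : ZMod p)
      = ((Nat.choose (v / p ^ n) (k / p ^ n) *
          ∏ l ∈ range n, Nat.choose (v / p ^ l % p) (k / p ^ l % p) : ℤ) : ZMod p) :=
    (ZMod.intCast_eq_intCast_iff _ _ _).mpr h
  rw [Nat.div_eq_of_lt hv, Nat.div_eq_of_lt hk, Nat.choose_self] at h2
  push_cast at h2 ⊢
  rw [h2, one_mul]
  rfl

end UPM


namespace UPM

open Finset

variable {p n : ℕ}

lemma permAddAut_apply (g : Equiv.Perm (Fin n → ZMod p)) (m : (Fin n → ZMod p) → ZMod p)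
    (x : Fin n → ZMod p) : permAddAut p n g m x = m (g.symm x) := rfl

lemma permAddAut_one (m : (Fin n → ZMod p) → ZMod p) : permAddAut p n 1 m = m := rfl

lemma permAddAut_mul (g h : Equiv.Perm (Fin n → ZMod p)) (m : (Fin n → ZMod p) → ZMod p) :
    permAddAut p n (g * h) m = permAddAut p n g (permAddAut p n h m) := rfl

lemma permAddAut_cancel (g : Equiv.Perm (Fin n → ZMod p)) (m : (Fin n → ZMod p) → ZMod p) :
    permAddAut p n g (permAddAut p n g⁻¹ m) = m := by
  funext x
  simp [permAddAut_apply, Equiv.Perm.inv_def]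

lemma phi_act [NeZero p] (k : ℕ) (g : Equiv.Perm (Fin n → ZMod p))
    (m : (Fin n → ZMod p) → ZMod p) :
    phi p n k (permAddAut p n g m)
      = ∑ μ, m μ * (Nat.choose (val p n (g μ)) k : ZMod p) := by
  rw [phi_apply]
  refine Fintype.sum_equiv g (fun μ => m μ * (Nat.choose (val p n (g μ)) k : ZMod p))
    (fun lam => permAddAut p n g m lam * (Nat.choose (val p n lam) k : ZMod p)) ?_ |>.symm
  intro μ
  show m μ * _ = permAddAut p n g m (g μ) * _
  rw [permAddAut_apply]
  simp

variable (p n)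

/-- The subgroup of permutations acting trivially on the subquotients of the binomial
filtration. -/
def Sgrp [NeZero p] : Subgroup (Equiv.Perm (Fin n → ZMod p)) where
  carrier := {g | ∀ k < p ^ n, ∀ m : (Fin n → ZMod p) → ZMod p,
    (∀ j < k, phi p n j m = 0) → phi p n k (permAddAut p n g m) = phi p n k m}
  one_mem' := by
    intro k _ m _
    rw [permAddAut_one]
  mul_mem' := by
    intro a b ha hb k hk m hm
    rw [permAddAut_mul]
    have h1 : ∀ j < k, phi p n j (permAddAut p n b m) = 0 := by
      intro j hj
      rw [hb j (by omega) m (fun j' hj' => hm j' (by omega))]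
      exact hm j hj
    rw [ha k hk _ h1, hb k hk m hm]
  inv_mem' := by
    intro g hg
    intro k
    induction k using Nat.strong_induction_on with
    | _ k ih =>
      intro hk m hm
      have h1 : ∀ j < k, phi p n j (permAddAut p n g⁻¹ m) = 0 := by
        intro j hj
        rw [ih j hj (by omega) m (fun j' hj' => hm j' (by omega))]
        exact hm j hj
      have h2 := hg k hk (permAddAut p n g⁻¹ m) h1
      rw [permAddAut_cancel] at h2
      exact h2.symm

variable {p n}


lemma sigmaPerm_apply' (i : Fin n) (μ : Fin n → ZMod p) :
    sigmaPerm p n i μ = sigmaFun p n i μ := rfl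

lemma sigmaPerm_fix (i : Fin n) (μ : Fin n → ZMod p)
    (hμ : ¬ ∀ j : Fin n, j < i → μ j = 0) : sigmaPerm p n i μ = μ := by
  funext kk
  rw [sigmaPerm_apply']
  unfold sigmaFun
  rw [if_neg (by tauto)]

lemma sigmaPerm_apply_i (i : Fin n) (μ : Fin n → ZMod p)
    (hμ : ∀ j : Fin n, j < i → μ j = 0) : sigmaPerm p n i μ i = μ i + 1 := by
  rw [sigmaPerm_apply']
  unfold sigmaFun
  rw [if_pos ⟨rfl, hμ⟩]

lemma zval_neg_one (hp : 1 < p) :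
    haveI : NeZero p := ⟨by omega⟩
    (-1 : ZMod p).val = p - 1 := by
  haveI : NeZero p := ⟨by omega⟩
  have h1 : (-1 : ZMod p) = ((p - 1 : ℕ) : ZMod p) := by
    have : ((p : ℕ) : ZMod p) = 0 := ZMod.natCast_self p
    rw [Nat.cast_sub (by omega : 1 ≤ p), this, Nat.cast_one, zero_sub]
  rw [h1, ZMod.val_cast_of_lt (by omega)]

lemma zval_add_one (hp : 1 < p) {a : ZMod p}
    (ha : a ≠ -1) :
    haveI : NeZero p := ⟨by omega⟩
    (a + 1).val = a.val + 1 := by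
  haveI : NeZero p := ⟨by omega⟩
  have h1 : (1 : ZMod p).val = 1 := by
    have : (1 : ZMod p) = ((1 : ℕ) : ZMod p) := by norm_cast
    rw [this, ZMod.val_cast_of_lt hp]
  have h2 : a.val ≠ p - 1 := by
    intro h
    exact ha (ZMod.val_injective p (h.trans (zval_neg_one hp).symm))
  have h3 : a.val < p := ZMod.val_lt a
  rw [← h1]
  exact ZMod.val_add_of_lt (by omega)

lemma dgt_def (p k l : ℕ) : dgt p k l = k / p ^ l % p := rfl

/-- The key combinatorial lemma: each generator `σ_i` acts trivially on the
subquotients of the binomial filtration. -/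
lemma sigma_mem_Sgrp' (hp : p.Prime) (i : Fin n) (k : ℕ) (hk : k < p ^ n)
    (m : (Fin n → ZMod p) → ZMod p)
    (hm : haveI : NeZero p := ⟨hp.ne_zero⟩; ∀ j < k, phi p n j m = 0) :
    haveI : NeZero p := ⟨hp.ne_zero⟩
    phi p n k (permAddAut p n (sigmaPerm p n i) m) = phi p n k m := by
  haveI : NeZero p := ⟨hp.ne_zero⟩
  have hp1 : 1 < p := hp.one_lt
  set iv := (i : ℕ) with hiv
  have hin : iv < n := i.isLt
  by_cases hki : dgt p k iv = 0
  · -- case (a): `k` has digit 0 at position `i`; pointwise equality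
    rw [phi_act, phi_apply]
    refine Finset.sum_congr rfl fun μ _ => ?_
    congr 1
    rw [cval_eq_cd hp k hk _ (val_lt hp1 _), cval_eq_cd hp k hk _ (val_lt hp1 _)]
    refine Finset.prod_congr rfl fun l hl => ?_
    have hln : l < n := mem_range.mp hl
    rw [val_dgt hp1 _ l hln, val_dgt hp1 _ l hln]
    by_cases hli : l = iv
    · subst hli
      rw [hki, Nat.choose_zero_right, Nat.choose_zero_right]
    · rw [vals_eq hp1 _ ⟨l, hln⟩, vals_eq hp1 _ ⟨l, hln⟩, sigmaPerm_apply',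
        sigmaFun_apply_ne p n i μ (Fin.ne_of_val_ne hli)]
  by_cases hlow : ∀ l < iv, dgt p k l = 0
  swap
  · -- case (b): some digit of `k` below `i` is nonzero; pointwise equality
    push_neg at hlow
    obtain ⟨l₀, hl₀, hd₀⟩ := hlow
    have hl₀n : l₀ < n := by omega
    rw [phi_act, phi_apply]
    refine Finset.sum_congr rfl fun μ _ => ?_
    congr 1
    by_cases hμ : ∀ j : Fin n, j < i → μ j = 0
    · rw [cval_eq_cd hp k hk _ (val_lt hp1 _), cval_eq_cd hp k hk _ (val_lt hp1 _)]
      have hfin : (⟨l₀, hl₀n⟩ : Fin n) < i := by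
        rw [Fin.lt_def]
        exact hl₀
      have hz : (μ ⟨l₀, hl₀n⟩).val = 0 := by rw [hμ _ hfin, ZMod.val_zero]
      have hz' : (sigmaPerm p n i μ ⟨l₀, hl₀n⟩).val = 0 := by
        rw [sigmaPerm_apply', sigmaFun_apply_ne p n i μ (Fin.ne_of_val_ne (by omega)), hμ _ hfin,
          ZMod.val_zero]
      rw [Finset.prod_eq_zero (Finset.mem_range.mpr hl₀n)
          (by rw [val_dgt hp1 _ l₀ hl₀n, vals_eq hp1 _ ⟨l₀, hl₀n⟩, hz',
                Nat.choose_eq_zero_of_lt (by omega), Nat.cast_zero]),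
        Finset.prod_eq_zero (Finset.mem_range.mpr hl₀n)
          (by rw [val_dgt hp1 _ l₀ hl₀n, vals_eq hp1 _ ⟨l₀, hl₀n⟩, hz,
                Nat.choose_eq_zero_of_lt (by omega), Nat.cast_zero])]
    · rw [sigmaPerm_fix i μ hμ]
  · -- case (c): the interesting case
    have hki1 : 1 ≤ dgt p k iv := Nat.one_le_iff_ne_zero.mpr hki
    have hkip : dgt p k iv < p := dgt_lt hp1 k iv
    have hdvd : p ^ iv ∣ k := by
      have hksum := sum_dgt hp1 n k hk
      rw [← hksum]
      apply Finset.dvd_sum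
      intro l hl
      rcases lt_or_ge l iv with h | h
      · rw [hlow l h, zero_mul]
        exact dvd_zero _
      · exact Dvd.dvd.mul_left (pow_dvd_pow p h) _
    have hkge : p ^ iv ≤ k := by
      by_contra hc
      push_neg at hc
      have h0 : k / p ^ iv = 0 := Nat.div_eq_of_lt hc
      rw [dgt_def, h0, Nat.zero_mod] at hki
      exact hki rfl
    have hqpos : 1 ≤ k / p ^ iv := by
      by_contra hc
      push_neg at hc
      interval_cases h : k / p ^ iv
      · rw [dgt_def, h, Nat.zero_mod] at hki
        exact hki rfl
    set K := k - p ^ iv with hK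
    set Q := k / p ^ iv - 1 with hQ
    have hq1 : k / p ^ iv = Q + 1 := by omega
    have hk_eq : k = p ^ iv * (Q + 1) := by
      rw [← hq1]
      exact (Nat.mul_div_cancel' hdvd).symm
    have hKQ : K = p ^ iv * Q := by
      have e := Nat.mul_add (p ^ iv) Q 1
      rw [mul_one] at e
      omega
    have hQmod : Q = p * (k / p ^ (iv + 1)) + (dgt p k iv - 1) := by
      have h1 := Nat.div_add_mod (k / p ^ iv) p
      rw [Nat.div_div_eq_div_mul, ← pow_succ] at h1
      rw [dgt_def] at hki1 hkip ⊢
      omega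
    -- digits of `K + a`
    have hdivi : ∀ a, a < p ^ iv → (K + a) / p ^ iv = Q := by
      intro a ha
      rw [hKQ, add_comm, Nat.add_mul_div_left _ _ (pow_pos (by omega) iv),
        Nat.div_eq_of_lt ha, zero_add]
    have hdig_lo : ∀ a, a < p ^ iv → ∀ l, l < iv → dgt p (K + a) l = dgt p a l := by
      intro a ha l hl
      have e : p ^ l * (p ^ (iv - l - 1) * p) = p ^ iv := by
        rw [← pow_succ, ← pow_add]
        congr 1
        omega
      have hKa : K + a = a + p ^ l * (p ^ (iv - l - 1) * p * Q) := by
        rw [hKQ, ← mul_assoc, e, add_comm]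
      rw [dgt_def, dgt_def, hKa, Nat.add_mul_div_left _ _ (pow_pos (by omega) l)]
      have e2 : p ^ (iv - l - 1) * p * Q = p * (p ^ (iv - l - 1) * Q) := by ring
      rw [e2, Nat.add_mul_mod_self_left]
    have hdig_i : ∀ a, a < p ^ iv → dgt p (K + a) iv = dgt p k iv - 1 := by
      intro a ha
      rw [dgt_def, hdivi a ha, hQmod, Nat.mul_add_mod]
      exact Nat.mod_eq_of_lt (by omega)
    have hdig_hi : ∀ a, a < p ^ iv → ∀ l, iv < l → dgt p (K + a) l = dgt p k l := by
      intro a ha l hl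
      rw [dgt_def, dgt_def]
      have e : p ^ l = p ^ iv * p ^ (l - iv) := by
        rw [← pow_add]
        congr 1
        omega
      have h2 : (K + a) / p ^ l = Q / p ^ (l - iv) := by
        rw [e, ← Nat.div_div_eq_div_mul, hdivi a ha]
      have e2 : p ^ (l - iv) = p * p ^ (l - iv - 1) := by
        rw [← pow_succ']
        congr 1
        omega
      have h3 : Q / p ^ (l - iv) = k / p ^ l := by
        rw [hQmod, e2, ← Nat.div_div_eq_div_mul, Nat.mul_add_div (show 0 < p by omega),
          Nat.div_eq_of_lt (show dgt p k iv - 1 < p by omega), add_zero,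
          Nat.div_div_eq_div_mul, ← pow_add]
        congr 2
        omega
      rw [h2, h3]
    have hKa_lt : ∀ a, a < p ^ iv → K + a < k := by
      intro a ha
      omega
    -- the pointwise identity
    have key : ∀ μ : Fin n → ZMod p,
        ((Nat.choose (val p n (sigmaPerm p n i μ)) k : ℕ) : ZMod p)
          - ((Nat.choose (val p n μ) k : ℕ) : ZMod p)
        = ∑ a ∈ range (p ^ iv), (-1 : ZMod p) ^ (∑ l ∈ range iv, dgt p a l)
            * ((Nat.choose (val p n μ) (K + a) : ℕ) : ZMod p) := by
      intro μ
      have hsplit : ∀ v : ℕ → ℕ, ∀ d : ℕ → ℕ,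
          ∏ l ∈ range n, ((Nat.choose (v l) (d l) : ℕ) : ZMod p)
            = (∏ l ∈ range iv, ((Nat.choose (v l) (d l) : ℕ) : ZMod p))
              * (((Nat.choose (v iv) (d iv) : ℕ) : ZMod p)
                * ∏ l ∈ Finset.Ico (iv + 1) n, ((Nat.choose (v l) (d l) : ℕ) : ZMod p)) := by
        intro v d
        rw [← Finset.prod_range_mul_prod_Ico _ (le_of_lt hin),
          Finset.prod_eq_prod_Ico_succ_bot hin]
      set H : ZMod p := ∏ l ∈ Finset.Ico (iv + 1) n,
        ((Nat.choose (vals p n μ l) (dgt p k l) : ℕ) : ZMod p) with hH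
      -- right-hand side
      have hrhs : ∑ a ∈ range (p ^ iv), (-1 : ZMod p) ^ (∑ l ∈ range iv, dgt p a l)
            * ((Nat.choose (val p n μ) (K + a) : ℕ) : ZMod p)
          = (∏ l ∈ range iv, if vals p n μ l = 0 then (1 : ZMod p) else 0)
            * (((Nat.choose (vals p n μ iv) (dgt p k iv - 1) : ℕ) : ZMod p) * H) := by
        have hterm : ∀ a ∈ range (p ^ iv), (-1 : ZMod p) ^ (∑ l ∈ range iv, dgt p a l)
              * ((Nat.choose (val p n μ) (K + a) : ℕ) : ZMod p)
            = (∏ l ∈ range iv,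
                ((-1 : ZMod p) ^ (dgt p a l) * ((Nat.choose (vals p n μ l) (dgt p a l) : ℕ) : ZMod p)))
              * (((Nat.choose (vals p n μ iv) (dgt p k iv - 1) : ℕ) : ZMod p) * H) := by
          intro a ha
          have ha' : a < p ^ iv := Finset.mem_range.mp ha
          rw [cval_eq_cd hp (K + a) (by have := hKa_lt a ha'; omega) _ (val_lt hp1 μ)]
          have hd : ∀ l ∈ range n, ((Nat.choose (dgt p (val p n μ) l) (dgt p (K + a) l) : ℕ) : ZMod p)
              = ((Nat.choose (vals p n μ l) (dgt p (K + a) l) : ℕ) : ZMod p) := by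
            intro l hl
            rw [val_dgt hp1 _ l (mem_range.mp hl)]
          rw [Finset.prod_congr rfl hd, hsplit (vals p n μ) (dgt p (K + a))]
          have h1 : ∀ l ∈ range iv, ((Nat.choose (vals p n μ l) (dgt p (K + a) l) : ℕ) : ZMod p)
              = ((Nat.choose (vals p n μ l) (dgt p a l) : ℕ) : ZMod p) := by
            intro l hl
            rw [hdig_lo a ha' l (mem_range.mp hl)]
          have h2 : ∀ l ∈ Finset.Ico (iv + 1) n,
              ((Nat.choose (vals p n μ l) (dgt p (K + a) l) : ℕ) : ZMod p)
              = ((Nat.choose (vals p n μ l) (dgt p k l) : ℕ) : ZMod p) := by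
            intro l hl
            rw [hdig_hi a ha' l (by have := Finset.mem_Ico.mp hl; omega)]
          rw [Finset.prod_congr rfl h1, Finset.prod_congr rfl h2, hdig_i a ha',
            Finset.prod_mul_distrib, Finset.prod_pow_eq_pow_sum]
          ring
        rw [Finset.sum_congr rfl hterm, ← Finset.sum_mul,
          sumfact hp1 iv (fun l c => (-1 : ZMod p) ^ c * ((Nat.choose (vals p n μ l) c : ℕ) : ZMod p))]
        congr 1
        refine Finset.prod_congr rfl fun l _ => ?_
        exact alt_sum hp1 _ (vals_lt hp1 μ l)
      rw [hrhs]
      by_cases hμ : ∀ j : Fin n, j < i → μ j = 0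
      · -- lower coordinates of μ vanish
        have hone : (∏ l ∈ range iv, if vals p n μ l = 0 then (1 : ZMod p) else 0) = 1 := by
          refine Finset.prod_eq_one fun l hl => ?_
          have hl' : l < iv := mem_range.mp hl
          have : vals p n μ l = 0 := by
            rw [vals_eq hp1 _ ⟨l, by omega⟩, hμ ⟨l, by omega⟩ (by rw [Fin.lt_def]; exact hl'),
              ZMod.val_zero]
          rw [if_pos this]
        rw [hone, one_mul]
        -- expand the left side
        rw [cval_eq_cd hp k hk _ (val_lt hp1 _), cval_eq_cd hp k hk _ (val_lt hp1 _)]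
        have hdv : ∀ ν : Fin n → ZMod p, ∀ l ∈ range n,
            ((Nat.choose (dgt p (val p n ν) l) (dgt p k l) : ℕ) : ZMod p)
            = ((Nat.choose (vals p n ν l) (dgt p k l) : ℕ) : ZMod p) := by
          intro ν l hl
          rw [val_dgt hp1 _ l (mem_range.mp hl)]
        rw [Finset.prod_congr rfl (hdv _), Finset.prod_congr rfl (hdv _),
          hsplit (vals p n (sigmaPerm p n i μ)) (dgt p k), hsplit (vals p n μ) (dgt p k)]
        have hlo1 : ∀ ν : Fin n → ZMod p, (∀ j : Fin n, j < i → ν j = 0) →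
            (∏ l ∈ range iv, ((Nat.choose (vals p n ν l) (dgt p k l) : ℕ) : ZMod p)) = 1 := by
          intro ν hν
          refine Finset.prod_eq_one fun l hl => ?_
          have hl' : l < iv := mem_range.mp hl
          rw [hlow l hl', Nat.choose_zero_right, Nat.cast_one]
        have hμ' : ∀ j : Fin n, j < i → sigmaPerm p n i μ j = 0 := by
          intro j hj
          rw [sigmaPerm_apply', sigmaFun_apply_ne p n i μ (ne_of_lt hj)]
          exact hμ j hj
        rw [hlo1 _ hμ', hlo1 _ hμ, one_mul, one_mul]
        have hIco : ∀ l ∈ Finset.Ico (iv + 1) n,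
            ((Nat.choose (vals p n (sigmaPerm p n i μ) l) (dgt p k l) : ℕ) : ZMod p)
            = ((Nat.choose (vals p n μ l) (dgt p k l) : ℕ) : ZMod p) := by
          intro l hl
          have hl' := Finset.mem_Ico.mp hl
          rw [vals_eq hp1 _ ⟨l, by omega⟩, vals_eq hp1 _ ⟨l, by omega⟩, sigmaPerm_apply',
            sigmaFun_apply_ne p n i μ
              (Fin.ne_of_val_ne (by simp only [Fin.val_mk]; omega))]
        rw [Finset.prod_congr rfl hIco, ← hH]
        have hvi : vals p n μ iv = (μ i).val := by
          rw [hiv, vals_eq hp1 μ ⟨(i : ℕ), hin⟩]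
        have hvi' : vals p n (sigmaPerm p n i μ) iv = (μ i + 1).val := by
          rw [hiv, vals_eq hp1 _ ⟨(i : ℕ), hin⟩]
          have : (⟨(i : ℕ), hin⟩ : Fin n) = i := by
            apply Fin.ext
            rfl
          rw [this, sigmaPerm_apply_i i μ hμ]
        rw [hvi, hvi', ← sub_mul]
        congr 1
        -- the scalar Pascal identity
        by_cases hm1 : μ i = -1
        · have hv0 : (μ i + 1).val = 0 := by
            rw [hm1, neg_add_cancel, ZMod.val_zero]
          have hvm : (μ i).val = p - 1 := by
            rw [hm1, zval_neg_one hp1]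
          rw [hv0, hvm, Nat.choose_eq_zero_of_lt (by omega), Nat.cast_zero]
          have hpascal : Nat.choose p (dgt p k iv)
              = Nat.choose (p - 1) (dgt p k iv - 1) + Nat.choose (p - 1) (dgt p k iv) := by
            have := Nat.choose_succ_succ' (p - 1) (dgt p k iv - 1)
            rw [show p - 1 + 1 = p by omega, show dgt p k iv - 1 + 1 = dgt p k iv by omega] at this
            exact this
          have hdvd0 : ((Nat.choose p (dgt p k iv) : ℕ) : ZMod p) = 0 :=
            (ZMod.natCast_eq_zero_iff _ _).mpr
              (hp.dvd_choose_self (by omega) hkip)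
          rw [hpascal] at hdvd0
          push_cast at hdvd0 ⊢
          linear_combination -hdvd0
        · rw [zval_add_one hp1 hm1]
          have hpascal := Nat.choose_succ_succ' ((μ i).val) (dgt p k iv - 1)
          rw [show dgt p k iv - 1 + 1 = dgt p k iv by omega] at hpascal
          rw [hpascal]
          push_cast
          ring
      · -- some lower coordinate of μ is nonzero: both sides vanish
        rw [sigmaPerm_fix i μ hμ, sub_self]
        push_neg at hμ
        obtain ⟨j₀, hj₀, hj₀'⟩ := hμ
        have hz : (∏ l ∈ range iv, if vals p n μ l = 0 then (1 : ZMod p) else 0) = 0 := by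
          refine Finset.prod_eq_zero (Finset.mem_range.mpr (Fin.lt_def.mp hj₀)) ?_
          rw [vals_eq hp1 μ j₀, if_neg (by simpa [ZMod.val_eq_zero] using hj₀')]
        rw [hz, zero_mul]
    -- now conclude at the level of φ
    have hstep : phi p n k (permAddAut p n (sigmaPerm p n i) m) - phi p n k m
        = ∑ a ∈ range (p ^ iv), (-1 : ZMod p) ^ (∑ l ∈ range iv, dgt p a l)
            * phi p n (K + a) m := by
      rw [phi_act, phi_apply, ← Finset.sum_sub_distrib]
      have h1 : ∀ μ ∈ (Finset.univ : Finset (Fin n → ZMod p)),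
          m μ * ((Nat.choose (val p n (sigmaPerm p n i μ)) k : ℕ) : ZMod p)
            - m μ * ((Nat.choose (val p n μ) k : ℕ) : ZMod p)
          = ∑ a ∈ range (p ^ iv), (-1 : ZMod p) ^ (∑ l ∈ range iv, dgt p a l)
              * (m μ * ((Nat.choose (val p n μ) (K + a) : ℕ) : ZMod p)) := by
        intro μ _
        rw [← mul_sub, key μ, Finset.mul_sum]
        refine Finset.sum_congr rfl fun a _ => ?_
        ring
      rw [Finset.sum_congr rfl h1, Finset.sum_comm]
      refine Finset.sum_congr rfl fun a _ => ?_
      rw [phi_apply, ← Finset.mul_sum]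
    have hzero : ∀ a ∈ range (p ^ iv), (-1 : ZMod p) ^ (∑ l ∈ range iv, dgt p a l)
        * phi p n (K + a) m = 0 := by
      intro a ha
      rw [hm (K + a) (hKa_lt a (Finset.mem_range.mp ha)), mul_zero]
    rw [Finset.sum_congr rfl hzero, Finset.sum_const, smul_zero] at hstep
    exact sub_eq_zero.mp hstep

lemma sigma_mem_Sgrp (hp : p.Prime) (i : Fin n) :
    haveI : NeZero p := ⟨hp.ne_zero⟩
    sigmaPerm p n i ∈ Sgrp p n := by
  haveI : NeZero p := ⟨hp.ne_zero⟩
  intro k hk m hm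
  exact sigma_mem_Sgrp' hp i k hk m hm


variable (p n)

/-- partial products `σ_{s-1} ⋯ σ_1 σ_0` -/
def tauSeq : ℕ → Equiv.Perm (Fin n → ZMod p)
  | 0 => 1
  | (s + 1) => (if h : s < n then sigmaPerm p n ⟨s, h⟩ else 1) * tauSeq s

/-- the "increment with carry" permutation -/
def tauP : Equiv.Perm (Fin n → ZMod p) := tauSeq p n n

variable {p n}

lemma tauSeq_mem (s : ℕ) : tauSeq p n s ∈ PSyl p n := by
  induction s with
  | zero => exact Subgroup.one_mem _
  | succ s ih =>
    refine Subgroup.mul_mem _ ?_ ih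
    split
    · exact Subgroup.subset_closure (Set.mem_range_self _)
    · exact Subgroup.one_mem _

lemma tauP_mem : tauP p n ∈ PSyl p n := tauSeq_mem n

lemma tauSeq_apply (s : ℕ) (hs : s ≤ n) (μ : Fin n → ZMod p) : ∀ l : Fin n,
    tauSeq p n s μ l
      = if ((l : ℕ) < s ∧ ∀ j : Fin n, j < l → μ j = -1) then μ l + 1 else μ l := by
  induction s with
  | zero =>
    intro l
    rw [if_neg (by omega)]
    rfl
  | succ s ih =>
    intro l
    have hsn : s < n := by omega
    have ih' := ih (by omega)
    have hseq : tauSeq p n (s + 1) μ l = sigmaPerm p n ⟨s, hsn⟩ (tauSeq p n s μ) l := by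
      show ((if h : s < n then sigmaPerm p n ⟨s, h⟩ else 1) * tauSeq p n s) μ l = _
      rw [dif_pos hsn, Equiv.Perm.mul_apply]
    rw [hseq]
    by_cases hl : (l : ℕ) = s
    · have hlfin : (⟨s, hsn⟩ : Fin n) = l := Fin.ext hl.symm
      rw [hlfin]
      by_cases hcond : ∀ j : Fin n, j < l → μ j = -1
      · have hw : ∀ j : Fin n, j < l → tauSeq p n s μ j = 0 := by
          intro j hj
          rw [ih' j, if_pos ⟨by rw [Fin.lt_def] at hj; omega,
            fun j' hj' => hcond j' (lt_trans hj' hj)⟩, hcond j hj, neg_add_cancel]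
        rw [sigmaPerm_apply_i _ _ hw, ih' l, if_neg (by omega), if_pos ⟨by omega, hcond⟩]
      · have hw : ¬ ∀ j : Fin n, j < l → tauSeq p n s μ j = 0 := by
          intro hw
          apply hcond
          have main : ∀ t : ℕ, ∀ j : Fin n, (j : ℕ) = t → j < l → μ j = -1 := by
            intro t
            induction t using Nat.strong_induction_on with
            | _ t iht =>
              intro j hjt hjl
              have hlower : ∀ j' : Fin n, j' < j → μ j' = -1 := by
                intro j' hj'
                exact iht (j' : ℕ) (by rw [Fin.lt_def] at hj'; omega) j' rfl
                  (lt_trans hj' hjl)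
              have hthis := hw j hjl
              rw [ih' j, if_pos ⟨by rw [Fin.lt_def] at hjl; omega, hlower⟩] at hthis
              exact eq_neg_of_add_eq_zero_left hthis
          exact fun j hj => main (j : ℕ) j rfl hj
        rw [sigmaPerm_fix _ _ hw, ih' l, if_neg (by omega), if_neg (by tauto)]
    · have hne : sigmaPerm p n ⟨s, hsn⟩ (tauSeq p n s μ) l = tauSeq p n s μ l := by
        rw [sigmaPerm_apply', sigmaFun_apply_ne _ _ _ _
          (Fin.ne_of_val_ne (by simp only [Fin.val_mk]; omega))]
      rw [hne, ih' l]
      rcases lt_or_ge (l : ℕ) s with h | h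
      · split_ifs with h1 h2 h2
        · rfl
        · exact absurd ⟨by omega, h1.2⟩ h2
        · exact absurd ⟨h, h2.2⟩ h1
        · rfl
      · rw [if_neg (by omega), if_neg (by omega)]

lemma tauP_apply (μ : Fin n → ZMod p) (l : Fin n) :
    tauP p n μ l = if (∀ j : Fin n, j < l → μ j = -1) then μ l + 1 else μ l := by
  rw [tauP, tauSeq_apply n le_rfl μ l]
  congr 1
  simp [l.isLt]

lemma val_tauP (hp : 1 < p) (μ : Fin n → ZMod p) :
    val p n (tauP p n μ) = (val p n μ + 1) % p ^ n := by
  haveI : NeZero p := ⟨by omega⟩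
  by_cases hall : ∀ j : Fin n, μ j = -1
  · -- μ = (p-1, ..., p-1): wraps around to 0
    have h1 : ∀ l : Fin n, tauP p n μ l = 0 := by
      intro l
      rw [tauP_apply, if_pos (fun j _ => hall j), hall l, neg_add_cancel]
    have h2 : val p n (tauP p n μ) = 0 := by
      unfold val
      refine Finset.sum_eq_zero fun l hl => ?_
      have hln : l < n := mem_range.mp hl
      rw [vals_eq hp _ ⟨l, hln⟩, h1, ZMod.val_zero, zero_mul]
    have h3 : val p n μ = p ^ n - 1 := by
      unfold val
      have : ∀ l ∈ range n, vals p n μ l * p ^ l = (p - 1) * p ^ l := by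
        intro l hl
        have hln : l < n := mem_range.mp hl
        rw [vals_eq hp _ ⟨l, hln⟩, hall, zval_neg_one hp]
      rw [Finset.sum_congr rfl this, geo_sum hp]
    have h4 : 0 < p ^ n := pow_pos (by omega) n
    rw [h2, h3]
    rw [show p ^ n - 1 + 1 = p ^ n by omega, Nat.mod_self]
  · push_neg at hall
    -- r = least index with μ_r ≠ -1
    have hex : ∃ t : ℕ, ∃ h : t < n, μ ⟨t, h⟩ ≠ -1 := by
      obtain ⟨j, hj⟩ := hall
      exact ⟨(j : ℕ), j.isLt, by rwa [Fin.eta]⟩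
    set r := Nat.find hex with hr
    obtain ⟨hrn, hrne⟩ := Nat.find_spec hex
    have hrmin : ∀ t < r, ∀ h : t < n, μ ⟨t, h⟩ = -1 := by
      intro t ht h
      by_contra hc
      exact Nat.find_min hex ht ⟨h, hc⟩
    have hμlt : ∀ j : Fin n, (j : ℕ) < r → μ j = -1 := by
      intro j hj
      rw [← Fin.eta j j.isLt]
      exact hrmin (j : ℕ) hj j.isLt
    have hcoord : ∀ l : Fin n, tauP p n μ l
        = if (l : ℕ) < r then 0 else if (l : ℕ) = r then μ l + 1 else μ l := by
      intro l
      rw [tauP_apply]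
      rcases lt_trichotomy (l : ℕ) r with h | h | h
      · rw [if_pos (fun j hj => hμlt j (by rw [Fin.lt_def] at hj; omega)),
          hμlt l h, neg_add_cancel, if_pos h]
      · rw [if_pos (fun j hj => hμlt j (by rw [Fin.lt_def] at hj; omega)),
          if_neg (by omega), if_pos h]
      · rw [if_neg, if_neg (by omega), if_neg (by omega)]
        intro hc
        exact hrne (hc ⟨r, hrn⟩ (by rw [Fin.lt_def]; simp only [Fin.val_mk]; exact h))
    -- now compute the two values
    have hsplit : ∀ ν : Fin n → ZMod p, val p n ν
        = (∑ l ∈ range r, vals p n ν l * p ^ l) + vals p n ν r * p ^ r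
          + ∑ l ∈ Finset.Ico (r + 1) n, vals p n ν l * p ^ l := by
      intro ν
      unfold val
      rw [← Finset.sum_range_add_sum_Ico _ (le_of_lt hrn),
        Finset.sum_eq_sum_Ico_succ_bot hrn]
      ring
    have hIco : ∀ l ∈ Finset.Ico (r + 1) n,
        vals p n (tauP p n μ) l * p ^ l = vals p n μ l * p ^ l := by
      intro l hl
      have hl' := Finset.mem_Ico.mp hl
      rw [vals_eq hp _ ⟨l, by omega⟩, vals_eq hp _ ⟨l, by omega⟩, hcoord,
        if_neg (by simp only [Fin.val_mk]; omega), if_neg (by simp only [Fin.val_mk]; omega)]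
    have hlow : ∑ l ∈ range r, vals p n (tauP p n μ) l * p ^ l = 0 := by
      refine Finset.sum_eq_zero fun l hl => ?_
      have hl' : l < r := mem_range.mp hl
      rw [vals_eq hp _ ⟨l, by omega⟩, hcoord, if_pos (by simp only [Fin.val_mk]; omega),
        ZMod.val_zero, zero_mul]
    have hlow' : ∑ l ∈ range r, vals p n μ l * p ^ l = (p ^ r - 1) := by
      have : ∀ l ∈ range r, vals p n μ l * p ^ l = (p - 1) * p ^ l := by
        intro l hl
        have hl' : l < r := mem_range.mp hl
        rw [vals_eq hp _ ⟨l, by omega⟩, hrmin l hl' (by omega), zval_neg_one hp]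
      rw [Finset.sum_congr rfl this, geo_sum hp]
    have hmid : vals p n (tauP p n μ) r = vals p n μ r + 1 := by
      rw [vals_eq hp _ ⟨r, hrn⟩, vals_eq hp _ ⟨r, hrn⟩, hcoord,
        if_neg (by simp only [Fin.val_mk]; omega), if_pos (by simp only [Fin.val_mk])]
      exact zval_add_one hp hrne
    have hv1 := hsplit (tauP p n μ)
    have hv2 := hsplit μ
    have hvlt := val_lt hp (tauP p n μ)
    have hgoal : val p n (tauP p n μ) = val p n μ + 1 := by
      rw [hv1, hv2, hlow, hlow', hmid, Finset.sum_congr rfl hIco]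
      have h4 : 0 < p ^ r := pow_pos (by omega) r
      have h5 : (vals p n μ r + 1) * p ^ r = vals p n μ r * p ^ r + p ^ r := by ring
      omega
    rw [hgoal, Nat.mod_eq_of_lt (by omega)]

lemma phi_tauP (hp : p.Prime) (j : ℕ) (hj1 : 1 ≤ j) (hj2 : j < p ^ n)
    (m : (Fin n → ZMod p) → ZMod p) :
    haveI : NeZero p := ⟨hp.ne_zero⟩
    phi p n j (permAddAut p n (tauP p n) m) = phi p n j m + phi p n (j - 1) m := by
  haveI : NeZero p := ⟨hp.ne_zero⟩
  have hp1 : 1 < p := hp.one_lt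
  rw [phi_act, phi_apply, phi_apply, ← Finset.sum_add_distrib]
  refine Finset.sum_congr rfl fun μ _ => ?_
  rw [← mul_add]
  congr 1
  rw [val_tauP hp1 μ]
  have hvlt := val_lt hp1 μ
  rcases lt_or_ge (val p n μ + 1) (p ^ n) with h | h
  · rw [Nat.mod_eq_of_lt h]
    have hpascal := Nat.choose_succ_succ' (val p n μ) (j - 1)
    rw [show j - 1 + 1 = j by omega] at hpascal
    rw [hpascal]
    push_cast
    ring
  · have hveq : val p n μ = p ^ n - 1 := by omega
    have h4 : 0 < p ^ n := pow_pos (by omega) n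
    rw [show val p n μ + 1 = p ^ n by omega, Nat.mod_self]
    rw [Nat.choose_eq_zero_of_lt (by omega), Nat.cast_zero]
    have hpascal := Nat.choose_succ_succ' (p ^ n - 1) (j - 1)
    rw [show p ^ n - 1 + 1 = p ^ n by omega, show j - 1 + 1 = j by omega] at hpascal
    have hdvd0 : ((Nat.choose (p ^ n) j : ℕ) : ZMod p) = 0 :=
      (ZMod.natCast_eq_zero_iff _ _).mpr
        (Nat.Prime.dvd_choose_pow hp (by omega) (by omega))
    rw [hpascal] at hdvd0
    rw [hveq]
    push_cast at hdvd0 ⊢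
    linear_combination -hdvd0

lemma phi_zero_act [NeZero p] (g : Equiv.Perm (Fin n → ZMod p))
    (m : (Fin n → ZMod p) → ZMod p) :
    phi p n 0 (permAddAut p n g m) = phi p n 0 m := by
  rw [phi_act, phi_apply]
  simp

lemma Sgrp_prop [NeZero p] {g : Equiv.Perm (Fin n → ZMod p)} (hg : g ∈ Sgrp p n) :
    ∀ k < p ^ n, ∀ m : (Fin n → ZMod p) → ZMod p,
      (∀ j < k, phi p n j m = 0) → phi p n k (permAddAut p n g m) = phi p n k m := hg

lemma PSyl_le_Sgrp (hp : p.Prime) :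
    haveI : NeZero p := ⟨hp.ne_zero⟩
    PSyl p n ≤ Sgrp p n := by
  haveI : NeZero p := ⟨hp.ne_zero⟩
  rw [PSyl, Subgroup.closure_le]
  rintro g ⟨i, rfl⟩
  exact sigma_mem_Sgrp hp i

end UPM

/-- The natural permutation action of `P_n` on the `F_p`-vector space with basis
`F_p^n` is uniserial of length `p^n`: for every nontrivial `P_n`-invariant additive
subgroup `N`, the subgroup `[P_n, N]` has index `p` in `N`; and the module has
cardinality `p ^ (p ^ n)` (i.e. `F_p`-dimension `p ^ n`). -/
theorem perm_module_uniserial (hp : p.Prime) (hn : 1 ≤ n) :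
    (∀ N : AddSubgroup ((Fin n → ZMod p) → ZMod p), N ≠ ⊥ →
      (∀ g ∈ PSyl p n, AddSubgroup.map (permAddAut p n g).toAddMonoidHom N = N) →
      (AddSubgroup.closure
        {x | ∃ g ∈ PSyl p n, ∃ m ∈ N, x = permAddAut p n g m - m}).relIndex N = p) ∧
    Nat.card ((Fin n → ZMod p) → ZMod p) = p ^ p ^ n := by
  haveI : NeZero p := ⟨hp.ne_zero⟩
  haveI : Fact p.Prime := ⟨hp⟩
  have hp1 : 1 < p := hp.one_lt
  classical
  constructor
  swap
  · rw [Nat.card_fun, Nat.card_fun, Nat.card_zmod, Nat.card_eq_fintype_card, Fintype.card_fin]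
  intro N hN hInv
  set C := AddSubgroup.closure
    {x | ∃ g ∈ PSyl p n, ∃ m ∈ N, x = permAddAut p n g m - m} with hC
  have hmemN : ∀ g ∈ PSyl p n, ∀ m ∈ N, permAddAut p n g m ∈ N := by
    intro g hg m hm
    rw [← hInv g hg]
    exact ⟨m, hm, rfl⟩
  have hCN : C ≤ N := by
    rw [hC, AddSubgroup.closure_le]
    rintro x ⟨g, hg, m, hm, rfl⟩
    exact sub_mem (hmemN g hg m hm) hm
  obtain ⟨a₀, ha₀⟩ := AddSubgroup.ne_bot_iff_exists_ne_zero.mp hN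
  have hf0' : (a₀ : (Fin n → ZMod p) → ZMod p) ≠ 0 := by
    intro h
    exact ha₀ (Subtype.ext h)
  have hex : ∃ j : ℕ, ∃ m ∈ N, UPM.phi p n j m ≠ 0 := by
    by_contra hc
    push_neg at hc
    exact hf0' (UPM.phi_nondeg hp1 _ (fun j _ => hc j _ a₀.2))
  set k := Nat.find hex with hkdef
  obtain ⟨m₀, hm₀N, hm₀⟩ := Nat.find_spec hex
  have hkmin : ∀ j < k, ∀ m ∈ N, UPM.phi p n j m = 0 := by
    intro j hj m hm
    by_contra hc
    exact Nat.find_min hex hj ⟨m, hm, hc⟩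
  have hk_lt : k < p ^ n := by
    have h1 : ∃ j < p ^ n, UPM.phi p n j (a₀ : (Fin n → ZMod p) → ZMod p) ≠ 0 := by
      by_contra hc
      push_neg at hc
      exact hf0' (UPM.phi_nondeg hp1 _ hc)
    obtain ⟨j, hj1, hj2⟩ := h1
    have := Nat.find_min' hex ⟨(a₀ : (Fin n → ZMod p) → ZMod p), a₀.2, hj2⟩
    omega
  have hCker : ∀ x ∈ C, UPM.phi p n k x = 0 := by
    have hle : C ≤ (UPM.phi p n k).ker := by
      rw [hC, AddSubgroup.closure_le]
      rintro x ⟨g, hg, m, hm, rfl⟩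
      have h1 := UPM.Sgrp_prop (UPM.PSyl_le_Sgrp hp hg) k hk_lt m
        (fun j hj => hkmin j hj m hm)
      show permAddAut p n g m - m ∈ (UPM.phi p n k).ker
      rw [AddMonoidHom.mem_ker, map_sub, h1, sub_self]
    exact fun x hx => AddMonoidHom.mem_ker.mp (hle hx)
  -- the sequence `u s = (τ - 1)^s m₀`
  set D : ((Fin n → ZMod p) → ZMod p) → ((Fin n → ZMod p) → ZMod p) :=
    fun m => permAddAut p n (UPM.tauP p n) m - m with hD
  set u : ℕ → ((Fin n → ZMod p) → ZMod p) := fun s => D^[s] m₀ with hu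
  have hu_zero : u 0 = m₀ := rfl
  have hu_succ : ∀ s, u (s + 1) = permAddAut p n (UPM.tauP p n) (u s) - u s := by
    intro s
    show D^[s + 1] m₀ = _
    rw [Function.iterate_succ_apply']
  have huN : ∀ s, u s ∈ N := by
    intro s
    induction s with
    | zero => exact hm₀N
    | succ s ih =>
      rw [hu_succ]
      exact sub_mem (hmemN _ UPM.tauP_mem _ ih) ih
  have huC : ∀ s, 1 ≤ s → u s ∈ C := by
    intro s hs
    obtain ⟨t, rfl⟩ : ∃ t, s = t + 1 := ⟨s - 1, by omega⟩
    rw [hu_succ]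
    exact AddSubgroup.subset_closure ⟨_, UPM.tauP_mem, u t, huN t, rfl⟩
  have huφ : ∀ s, ∀ i < p ^ n, UPM.phi p n i (u s)
      = if s ≤ i then UPM.phi p n (i - s) m₀ else 0 := by
    intro s
    induction s with
    | zero =>
      intro i hi
      rw [hu_zero, if_pos (Nat.zero_le i), Nat.sub_zero]
    | succ s ih =>
      intro i hi
      rw [hu_succ, map_sub]
      rcases Nat.eq_zero_or_pos i with h0 | h0
      · subst h0
        rw [UPM.phi_zero_act, sub_self, if_neg (by omega)]
      · rw [UPM.phi_tauP hp i h0 hi]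
        have he : UPM.phi p n i (u s) + UPM.phi p n (i - 1) (u s)
            - UPM.phi p n i (u s) = UPM.phi p n (i - 1) (u s) := by ring
        rw [he, ih (i - 1) (by omega)]
        rcases le_or_gt (s + 1) i with hle | hlt
        · rw [if_pos (by omega), if_pos hle, show i - 1 - s = i - (s + 1) by omega]
        · rw [if_neg (by omega), if_neg (by omega)]
  have hdown : ∀ t : ℕ, ∀ J, k < J → p ^ n ≤ J + t → ∀ f : (Fin n → ZMod p) → ZMod p,
      (∀ j < J, UPM.phi p n j f = 0) → f ∈ C := by
    intro t
    induction t with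
    | zero =>
      intro J hJ hJt f hf
      rw [UPM.phi_nondeg hp1 f (fun j hj => hf j (by omega))]
      exact zero_mem C
    | succ t ih =>
      intro J hJ hJt f hf
      rcases le_or_gt (p ^ n) J with hge | hlt
      · rw [UPM.phi_nondeg hp1 f (fun j hj => hf j (by omega))]
        exact zero_mem C
      · set s := J - k with hs
        have hs1 : 1 ≤ s := by omega
        have hw := huφ s
        have hwi : ∀ i < J, UPM.phi p n i (u s) = 0 := by
          intro i hiJ
          rw [hw i (by omega)]
          split
          · exact hkmin (i - s) (by omega) m₀ hm₀N
          · rfl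
        have hwJ : UPM.phi p n J (u s) = UPM.phi p n k m₀ := by
          rw [hw J hlt, if_pos (by omega), show J - s = k by omega]
        set c : ZMod p := UPM.phi p n J f * (UPM.phi p n k m₀)⁻¹ with hc'
        have hcw : c * UPM.phi p n J (u s) = UPM.phi p n J f := by
          rw [hwJ, hc', mul_assoc, inv_mul_cancel₀ hm₀, mul_one]
        have hg : ∀ j < J + 1, UPM.phi p n j (f - c.val • u s) = 0 := by
          intro j hj
          rw [map_sub, map_nsmul, nsmul_eq_mul, ZMod.natCast_val, ZMod.cast_id]
          rcases lt_or_ge j J with h | h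
          · rw [hf j h, hwi j h, mul_zero, sub_zero]
          · have hje : j = J := by omega
            subst hje
            rw [hcw, sub_self]
        have hgC := ih (J + 1) (by omega) (by omega) _ hg
        have hfe : f = (f - c.val • u s) + c.val • u s := by abel
        rw [hfe]
        exact add_mem hgC (AddSubgroup.nsmul_mem C (huC s hs1) c.val)
  have hNker : ∀ m ∈ N, UPM.phi p n k m = 0 → m ∈ C := by
    intro m hm hφ
    refine hdown (p ^ n) (k + 1) (by omega) (by omega) m ?_
    intro j hj
    rcases lt_or_ge j k with h | h
    · exact hkmin j h m hm
    · have hje : j = k := by omega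
      subst hje
      exact hφ
  set ψ : ↥N →+ ZMod p := (UPM.phi p n k).comp N.subtype with hψ
  have hψsurj : Function.Surjective ψ := by
    intro y
    have hmem : ((y * (UPM.phi p n k m₀)⁻¹).val • m₀) ∈ N :=
      AddSubgroup.nsmul_mem N hm₀N _
    refine ⟨⟨_, hmem⟩, ?_⟩
    show UPM.phi p n k ((y * (UPM.phi p n k m₀)⁻¹).val • m₀) = y
    rw [map_nsmul, nsmul_eq_mul, ZMod.natCast_val, ZMod.cast_id, mul_assoc,
      inv_mul_cancel₀ hm₀, mul_one]
  have hkerC : ψ.ker = C.addSubgroupOf N := by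
    ext ⟨m, hm⟩
    rw [AddMonoidHom.mem_ker, AddSubgroup.mem_addSubgroupOf]
    constructor
    · intro h
      exact hNker m hm h
    · intro h
      exact hCker m h
  have hrel : C.relIndex N = (C.addSubgroupOf N).index := rfl
  rw [hrel, ← hkerC, AddSubgroup.index_ker,
    AddMonoidHom.range_eq_top_of_surjective ψ hψsurj]
  exact (Nat.card_congr AddSubgroup.topEquiv.toEquiv).trans (Nat.card_zmod p)
end

section
/- Let p be a prime and n ≥ 1. Then H = ⟨η_0,…,η_{n−1}⟩ is isomorphic to the direct product of n copies of the cyclic group C_{p−1}, H normalizes P_n, and H is a Hall p'-subgroup of N_{Sym(F_p^n)}(P_n). -/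
variable (p n : ℕ)

/-- The permutation `η_i` of `F_p^n` multiplying the `i`-th coordinate by the unit `r`. -/
def etaPerm (r : (ZMod p)ˣ) (i : Fin n) : Equiv.Perm (Fin n → ZMod p) where
  toFun lam := fun k => if k = i then (r : ZMod p) * lam k else lam k
  invFun lam := fun k => if k = i then ((r⁻¹ : (ZMod p)ˣ) : ZMod p) * lam k else lam k
  left_inv := by
    intro lam
    funext k
    by_cases hk : k = i
    · subst hk
      simp only [if_pos rfl, ite_true, eq_self_iff_true, if_true, ← mul_assoc,
        ← Units.val_mul, inv_mul_cancel, Units.val_one, one_mul]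
    · simp [hk]
  right_inv := by
    intro lam
    funext k
    by_cases hk : k = i
    · subst hk
      simp only [if_pos rfl, ite_true, eq_self_iff_true, if_true, ← mul_assoc,
        ← Units.val_mul, mul_inv_cancel, Units.val_one, one_mul]
    · simp [hk]


/-! ### Infrastructure -/

theorem Equiv.Perm.inv_apply_self {α : Type*} (f : Equiv.Perm α) (x : α) : f⁻¹ (f x) = x :=
  f.symm_apply_apply x

theorem Equiv.Perm.apply_inv_self {α : Type*} (f : Equiv.Perm α) (x : α) : f (f⁻¹ x) = x :=
  f.apply_symm_apply x

section Infra

lemma sigmaPerm_apply (i : Fin n) (lam : Fin n → ZMod p) :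
    sigmaPerm p n i lam = sigmaFun p n i lam := rfl

lemma sigmaPerm_pow (i : Fin n) (m : ℕ) (lam : Fin n → ZMod p) :
    (sigmaPerm p n i ^ m) lam =
      fun k => if k = i ∧ ∀ j : Fin n, j < i → lam j = 0 then lam k + m else lam k := by
  induction m with
  | zero =>
    funext k
    simp
  | succ m ih =>
    rw [pow_succ', Equiv.Perm.mul_apply, ih]
    set lam' : Fin n → ZMod p :=
      fun k => if k = i ∧ ∀ j : Fin n, j < i → lam j = 0 then lam k + m else lam k with hlam'
    have hne : ∀ j : Fin n, j ≠ i → lam' j = lam j := by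
      intro j hj
      rw [hlam']
      simp only [hj, false_and, if_false]
    funext k
    rw [sigmaPerm_apply]
    unfold sigmaFun
    by_cases hk : k = i
    · subst hk
      by_cases hc : ∀ j : Fin n, j < k → lam j = 0
      · have hc' : ∀ j : Fin n, j < k → lam' j = 0 := by
          intro j hj
          rw [hne j (ne_of_lt hj)]
          exact hc j hj
        rw [if_pos ⟨rfl, hc'⟩, if_pos ⟨rfl, hc⟩]
        have hv : lam' k = lam k + m := if_pos ⟨rfl, hc⟩
        rw [hv]
        push_cast
        ring
      · have hc' : ¬ ∀ j : Fin n, j < k → lam' j = 0 := by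
          intro h
          exact hc fun j hj => by rw [← hne j (ne_of_lt hj)]; exact h j hj
        rw [if_neg (by tauto), if_neg (by tauto)]
        exact if_neg (by tauto)
    · rw [if_neg (by tauto), if_neg (by tauto)]
      exact hne k hk

/-- The permutation of `F_p^{n+1}` acting as `g` on the first `n` coordinates and as a
block-dependent translation on the last coordinate. -/
def blockMap (g : Equiv.Perm (Fin n → ZMod p)) (f : (Fin n → ZMod p) → ZMod p) :
    Equiv.Perm (Fin (n + 1) → ZMod p) where
  toFun lam := Fin.snoc (g (Fin.init lam)) (lam (Fin.last n) + f (Fin.init lam))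
  invFun lam := Fin.snoc (g⁻¹ (Fin.init lam)) (lam (Fin.last n) - f (g⁻¹ (Fin.init lam)))
  left_inv := by
    intro lam
    simp only [Fin.init_snoc, Fin.snoc_last, Equiv.Perm.inv_apply_self, add_sub_cancel_right]
    exact Fin.snoc_init_self lam
  right_inv := by
    intro lam
    simp only [Fin.init_snoc, Fin.snoc_last, Equiv.Perm.apply_inv_self, sub_add_cancel]
    exact Fin.snoc_init_self lam

lemma blockMap_apply (g : Equiv.Perm (Fin n → ZMod p)) (f : (Fin n → ZMod p) → ZMod p)
    (lam : Fin (n + 1) → ZMod p) :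
    blockMap p n g f lam =
      Fin.snoc (g (Fin.init lam)) (lam (Fin.last n) + f (Fin.init lam)) := rfl

lemma blockMap_apply_snoc (g : Equiv.Perm (Fin n → ZMod p)) (f : (Fin n → ZMod p) → ZMod p)
    (mu : Fin n → ZMod p) (x : ZMod p) :
    blockMap p n g f (Fin.snoc mu x) = Fin.snoc (g mu) (x + f mu) := by
  rw [blockMap_apply]
  simp [Fin.init_snoc, Fin.snoc_last]

lemma blockMap_one : blockMap p n 1 0 = 1 := by
  ext lam
  rw [blockMap_apply]
  simp only [Equiv.Perm.one_apply, Pi.zero_apply, add_zero]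
  rw [Fin.snoc_init_self]

lemma blockMap_mul (g g' : Equiv.Perm (Fin n → ZMod p)) (f f' : (Fin n → ZMod p) → ZMod p) :
    blockMap p n g f * blockMap p n g' f' = blockMap p n (g * g') (f' + f ∘ g') := by
  apply Equiv.ext
  intro lam
  rw [Equiv.Perm.mul_apply, blockMap_apply p n g' f', blockMap_apply_snoc, blockMap_apply]
  simp only [Equiv.Perm.mul_apply, Pi.add_apply, Function.comp_apply, ← add_assoc]

lemma blockMap_inv (g : Equiv.Perm (Fin n → ZMod p)) (f : (Fin n → ZMod p) → ZMod p) :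
    (blockMap p n g f)⁻¹ = blockMap p n g⁻¹ (fun mu => -(f (g⁻¹ mu))) := by
  apply inv_eq_of_mul_eq_one_right
  rw [blockMap_mul, mul_inv_cancel]
  have h1 : ((fun mu => -(f (g⁻¹ mu))) + f ∘ ⇑g⁻¹ : (Fin n → ZMod p) → ZMod p) = 0 := by
    funext mu; simp
  rw [h1, blockMap_one]

lemma blockMap_injective {g g' : Equiv.Perm (Fin n → ZMod p)}
    {f f' : (Fin n → ZMod p) → ZMod p} (h : blockMap p n g f = blockMap p n g' f') :
    g = g' ∧ f = f' := by
  have key : ∀ mu : Fin n → ZMod p, Fin.snoc (g mu) ((0 : ZMod p) + f mu)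
      = (Fin.snoc (g' mu) ((0 : ZMod p) + f' mu) : Fin (n+1) → ZMod p) := by
    intro mu
    rw [← blockMap_apply_snoc, ← blockMap_apply_snoc, h]
  constructor
  · apply Equiv.ext
    intro mu
    have := congrArg Fin.init (key mu)
    rwa [Fin.init_snoc, Fin.init_snoc] at this
  · funext mu
    have := congrFun (key mu) (Fin.last n)
    rw [Fin.snoc_last, Fin.snoc_last, zero_add, zero_add] at this
    exact this

end Infra

section Structure

lemma init_apply (lam : Fin (n + 1) → ZMod p) (j : Fin n) :
    Fin.init lam j = lam j.castSucc := rfl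

lemma cond_castSucc (i : Fin n) (lam : Fin (n + 1) → ZMod p) :
    (∀ j : Fin (n + 1), j < i.castSucc → lam j = 0) ↔
      (∀ j : Fin n, j < i → Fin.init lam j = 0) := by
  constructor
  · intro H j hj
    exact H j.castSucc (by rwa [Fin.castSucc_lt_castSucc_iff])
  · intro H j hj
    have hne : j ≠ Fin.last n := by
      intro h
      subst h
      exact absurd (lt_of_lt_of_le hj (Fin.le_last _)) (lt_irrefl _)
    obtain ⟨j0, rfl⟩ := Fin.exists_castSucc_eq.mpr hne
    exact H j0 (Fin.castSucc_lt_castSucc_iff.mp hj)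

lemma sigmaPerm_castSucc (i : Fin n) :
    sigmaPerm p (n + 1) i.castSucc = blockMap p n (sigmaPerm p n i) 0 := by
  apply Equiv.ext
  intro lam
  rw [blockMap_apply]
  funext k
  induction k using Fin.lastCases with
  | last =>
    rw [Fin.snoc_last, Pi.zero_apply, add_zero, sigmaPerm_apply]
    exact sigmaFun_apply_ne p (n+1) _ lam (Fin.castSucc_lt_last i).ne'
  | cast k =>
    rw [Fin.snoc_castSucc, sigmaPerm_apply]
    unfold sigmaFun
    rw [sigmaPerm_apply]
    unfold sigmaFun
    by_cases hk : k = i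
    · subst hk
      by_cases hc : ∀ j : Fin n, j < k → Fin.init lam j = 0
      · rw [if_pos ⟨rfl, (cond_castSucc p n k lam).mpr hc⟩, if_pos ⟨rfl, hc⟩, init_apply]
      · rw [if_neg (fun h => hc ((cond_castSucc p n k lam).mp h.2)),
          if_neg (fun h => hc h.2), init_apply]
    · rw [if_neg (fun h => hk (Fin.castSucc_inj.mp h.1)), if_neg (fun h => hk h.1), init_apply]

lemma sigmaPerm_last :
    sigmaPerm p (n + 1) (Fin.last n) =
      blockMap p n 1 (Pi.single (0 : Fin n → ZMod p) (1 : ZMod p)) := by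
  apply Equiv.ext
  intro lam
  rw [blockMap_apply]
  funext k
  induction k using Fin.lastCases with
  | last =>
    rw [Fin.snoc_last, sigmaPerm_apply]
    unfold sigmaFun
    rw [Pi.single_apply]
    by_cases hc : Fin.init lam = 0
    · have hcnd : ∀ j : Fin (n + 1), j < Fin.last n → lam j = 0 := by
        intro j hj
        have hne : j ≠ Fin.last n := ne_of_lt hj
        obtain ⟨j0, rfl⟩ := Fin.exists_castSucc_eq.mpr hne
        have : Fin.init lam j0 = 0 := by rw [hc]; rfl
        rwa [init_apply] at this
      rw [if_pos hc, if_pos ⟨rfl, hcnd⟩]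
    · rw [if_neg hc, add_zero, if_neg ?_]
      rintro ⟨-, H⟩
      apply hc
      funext j
      rw [init_apply]
      exact H j.castSucc (Fin.castSucc_lt_last j)
  | cast k =>
    rw [Fin.snoc_castSucc, Equiv.Perm.one_apply, sigmaPerm_apply, init_apply,
      sigmaFun_apply_ne p (n+1) _ lam (Fin.castSucc_lt_last k).ne]

lemma sigmaPerm_mem (i : Fin n) : sigmaPerm p n i ∈ PSyl p n :=
  Subgroup.subset_closure (Set.mem_range_self i)

lemma exists_elem_zero [Fact p.Prime] (c : Fin n → ZMod p) :
    ∃ g ∈ PSyl p n, g 0 = c := by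
  have key : ∀ m : ℕ, ∀ c : Fin n → ZMod p,
      (∀ j : Fin n, (j : ℕ) < n - m → c j = 0) → ∃ g ∈ PSyl p n, g 0 = c := by
    intro m
    induction m with
    | zero =>
      intro c hc
      refine ⟨1, one_mem _, ?_⟩
      funext j
      rw [Equiv.Perm.one_apply]
      exact (hc j (by simp only [Nat.sub_zero]; exact j.isLt)).symm
    | succ m ih =>
      intro c hc
      by_cases h : n - (m + 1) < n
      case neg =>
        have hn0 : n = 0 := by omega
        refine ⟨1, one_mem _, ?_⟩
        funext j
        exact absurd j.isLt (by omega)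
      case pos =>
        set I : Fin n := ⟨n - (m + 1), h⟩ with hI
        set c' := Function.update c I 0 with hc'
        have hcond : ∀ j : Fin n, (j : ℕ) < n - m → c' j = 0 := by
          intro j hj
          by_cases hjI : j = I
          · subst hjI
            simp [hc']
          · rw [hc', Function.update_of_ne hjI]
            apply hc
            have : (j : ℕ) ≠ n - (m + 1) := fun hh => hjI (Fin.ext hh)
            omega
        obtain ⟨g', hg', hg'0⟩ := ih c' hcond
        refine ⟨sigmaPerm p n I ^ (c I).val * g', mul_mem (pow_mem (sigmaPerm_mem p n I) _) hg', ?_⟩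
        rw [Equiv.Perm.mul_apply, hg'0, sigmaPerm_pow]
        have hcnd : ∀ j : Fin n, j < I → c' j = 0 := by
          intro j hj
          rw [hc', Function.update_of_ne (ne_of_lt hj)]
          exact hc j hj
        funext k
        by_cases hk : k = I
        · subst hk
          rw [if_pos ⟨rfl, hcnd⟩, hc']
          simp only [Function.update_self, zero_add]
          exact ZMod.natCast_rightInverse (c I)
        · rw [if_neg (by tauto), hc', Function.update_of_ne hk]
  exact key n c (fun j hj => absurd hj (by omega))

lemma structure_of_mem {g : Equiv.Perm (Fin (n + 1) → ZMod p)} (hg : g ∈ PSyl p (n + 1)) :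
    ∃ gb ∈ PSyl p n, ∃ f, g = blockMap p n gb f := by
  refine Subgroup.closure_induction ?_ ?_ ?_ ?_ hg
  · rintro x ⟨i, rfl⟩
    induction i using Fin.lastCases with
    | last => exact ⟨1, one_mem _, _, sigmaPerm_last p n⟩
    | cast i => exact ⟨sigmaPerm p n i, sigmaPerm_mem p n i, 0, sigmaPerm_castSucc p n i⟩
  · exact ⟨1, one_mem _, 0, (blockMap_one p n).symm⟩
  · rintro x y - - ⟨xb, hxb, fx, rfl⟩ ⟨yb, hyb, fy, rfl⟩
    exact ⟨xb * yb, mul_mem hxb hyb, _, blockMap_mul p n xb yb fx fy⟩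
  · rintro x - ⟨xb, hxb, fx, rfl⟩
    exact ⟨xb⁻¹, inv_mem hxb, _, blockMap_inv p n xb fx⟩

lemma exists_lift {gb : Equiv.Perm (Fin n → ZMod p)} (hgb : gb ∈ PSyl p n) :
    ∃ f, blockMap p n gb f ∈ PSyl p (n + 1) := by
  have : ∃ g ∈ PSyl p (n + 1), ∃ f, g = blockMap p n gb f := by
    refine Subgroup.closure_induction ?_ ?_ ?_ ?_ hgb
    · rintro x ⟨i, rfl⟩
      exact ⟨_, sigmaPerm_mem p (n+1) i.castSucc, 0, sigmaPerm_castSucc p n i⟩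
    · exact ⟨1, one_mem _, 0, (blockMap_one p n).symm⟩
    · rintro x y - - ⟨gx, hgx, fx, hfx⟩ ⟨gy, hgy, fy, hfy⟩
      exact ⟨gx * gy, mul_mem hgx hgy, _, by rw [hfx, hfy, blockMap_mul]⟩
    · rintro x - ⟨gx, hgx, fx, hfx⟩
      exact ⟨gx⁻¹, inv_mem hgx, _, by rw [hfx, blockMap_inv]⟩
  obtain ⟨g, hgmem, f, rfl⟩ := this
  exact ⟨f, hgmem⟩

lemma blockMap_one_add (u v : (Fin n → ZMod p) → ZMod p) :
    blockMap p n 1 (u + v) = blockMap p n 1 u * blockMap p n 1 v := by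
  rw [blockMap_mul, mul_one]
  congr 1
  funext mu
  simp [add_comm]

lemma blockMap_one_pow (s : (Fin n → ZMod p) → ZMod p) (k : ℕ) :
    blockMap p n 1 s ^ k = blockMap p n 1 (k • s) := by
  induction k with
  | zero => rw [pow_zero, zero_smul, blockMap_one]
  | succ k ih =>
    rw [pow_succ, ih, ← blockMap_one_add, succ_nsmul]

lemma blockMap_single_mem [Fact p.Prime] (mu : Fin n → ZMod p) (a : ZMod p) :
    blockMap p n 1 (Pi.single mu a) ∈ PSyl p (n + 1) := by
  -- first the case mu = 0
  have h0 : blockMap p n 1 (Pi.single (0 : Fin n → ZMod p) a) ∈ PSyl p (n + 1) := by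
    have : blockMap p n 1 (Pi.single (0 : Fin n → ZMod p) a)
        = sigmaPerm p (n + 1) (Fin.last n) ^ a.val := by
      rw [sigmaPerm_last, blockMap_one_pow]
      congr 1
      funext nu
      rw [Pi.smul_apply, Pi.single_apply, Pi.single_apply]
      by_cases hnu : nu = 0
      · rw [if_pos hnu, if_pos hnu, nsmul_eq_mul, mul_one]
        exact (ZMod.natCast_rightInverse a).symm
      · rw [if_neg hnu, if_neg hnu, smul_zero]
    rw [this]
    exact pow_mem (sigmaPerm_mem p (n+1) _) _
  obtain ⟨gb, hgb, hgb0⟩ := exists_elem_zero p n mu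
  obtain ⟨fg, hfg⟩ := exists_lift p n hgb
  have key : blockMap p n 1 (Pi.single mu a) =
      blockMap p n gb fg * blockMap p n 1 (Pi.single 0 a) * (blockMap p n gb fg)⁻¹ := by
    rw [blockMap_inv, blockMap_mul, blockMap_mul]
    congr 1
    · rw [mul_one, mul_inv_cancel]
    · funext nu
      simp only [Pi.add_apply, Function.comp_apply, Equiv.Perm.coe_one, id_eq]
      have : (Pi.single (0 : Fin n → ZMod p) a : (Fin n → ZMod p) → ZMod p) (gb⁻¹ nu)
          = (Pi.single mu a : (Fin n → ZMod p) → ZMod p) nu := by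
        rw [Pi.single_apply, Pi.single_apply]
        have hiff : gb⁻¹ nu = 0 ↔ nu = mu := by
          constructor
          · intro h
            rw [← hgb0, ← h, Equiv.Perm.apply_inv_self]
          · intro h
            rw [h, ← hgb0, Equiv.Perm.inv_apply_self]
        by_cases hmu : nu = mu
        · rw [if_pos hmu, if_pos (hiff.mpr hmu)]
        · rw [if_neg hmu, if_neg (fun hh => hmu (hiff.mp hh))]
      rw [this]
      ring
  rw [key]
  exact mul_mem (mul_mem hfg h0) (inv_mem hfg)

lemma blockMap_one_mem [Fact p.Prime] (f : (Fin n → ZMod p) → ZMod p) :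
    blockMap p n 1 f ∈ PSyl p (n + 1) := by
  have hf : f = ∑ mu : Fin n → ZMod p, Pi.single mu (f mu) := (Finset.univ_sum_single f).symm
  rw [hf]
  have : ∀ s : Finset (Fin n → ZMod p),
      blockMap p n 1 (∑ mu ∈ s, Pi.single mu (f mu)) ∈ PSyl p (n + 1) := by
    intro s
    induction s using Finset.induction with
    | empty => rw [Finset.sum_empty, blockMap_one]; exact one_mem _
    | insert _ _ hx ih =>
      rw [Finset.sum_insert hx, blockMap_one_add]
      exact mul_mem (blockMap_single_mem p n _ _) ih
  exact this Finset.univ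

end Structure

section Diag

/-- The diagonal scaling permutation. -/
def diagPerm (u : Fin n → (ZMod p)ˣ) : Equiv.Perm (Fin n → ZMod p) where
  toFun lam := fun i => (u i : ZMod p) * lam i
  invFun lam := fun i => ((u i)⁻¹ : (ZMod p)ˣ) * lam i
  left_inv := by
    intro lam
    funext i
    simp [← mul_assoc, ← Units.val_mul]
  right_inv := by
    intro lam
    funext i
    simp [← mul_assoc, ← Units.val_mul]

lemma diagPerm_apply (u : Fin n → (ZMod p)ˣ) (lam : Fin n → ZMod p) :
    diagPerm p n u lam = fun i => (u i : ZMod p) * lam i := rfl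

lemma diagPerm_one : diagPerm p n 1 = 1 := by
  apply Equiv.ext
  intro lam
  rw [diagPerm_apply]
  funext i
  simp

lemma diagPerm_mul (u v : Fin n → (ZMod p)ˣ) :
    diagPerm p n (u * v) = diagPerm p n u * diagPerm p n v := by
  apply Equiv.ext
  intro lam
  rw [Equiv.Perm.mul_apply, diagPerm_apply, diagPerm_apply, diagPerm_apply]
  funext i
  simp [mul_assoc]

lemma diagPerm_inv (u : Fin n → (ZMod p)ˣ) :
    (diagPerm p n u)⁻¹ = diagPerm p n u⁻¹ := by
  apply inv_eq_of_mul_eq_one_right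
  rw [← diagPerm_mul, mul_inv_cancel, diagPerm_one]

lemma diagPerm_injective {u v : Fin n → (ZMod p)ˣ} (h : diagPerm p n u = diagPerm p n v) :
    u = v := by
  funext i
  have := congrFun (Equiv.ext_iff.mp h (Pi.single i 1)) i
  rw [diagPerm_apply, diagPerm_apply] at this
  simp only [Pi.single_eq_same, mul_one] at this
  exact Units.ext this

lemma diagPerm_conj_sigma [Fact p.Prime] (u : Fin n → (ZMod p)ˣ) (i : Fin n) :
    diagPerm p n u * sigmaPerm p n i * (diagPerm p n u)⁻¹ =
      sigmaPerm p n i ^ (ZMod.val ((u i : ZMod p))) := by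
  apply Equiv.ext
  intro lam
  rw [Equiv.Perm.mul_apply, Equiv.Perm.mul_apply, diagPerm_inv, sigmaPerm_pow, sigmaPerm_apply]
  set mu : Fin n → ZMod p := diagPerm p n u⁻¹ lam with hmu
  have hmuap : ∀ j, mu j = ((u j)⁻¹ : (ZMod p)ˣ) * lam j := fun j => rfl
  have hcond : (∀ j : Fin n, j < i → mu j = 0) ↔ (∀ j : Fin n, j < i → lam j = 0) := by
    constructor
    · intro H j hj
      have := H j hj
      rw [hmuap] at this
      exact (Units.mul_right_eq_zero _).mp this
    · intro H j hj
      rw [hmuap, H j hj, mul_zero]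
  unfold sigmaFun
  funext k
  rw [diagPerm_apply]
  beta_reduce
  simp only [hcond]
  by_cases h : k = i ∧ ∀ j : Fin n, j < i → lam j = 0
  · rw [if_pos h, if_pos h, hmuap, mul_add, mul_one, ← mul_assoc, ← Units.val_mul,
      mul_inv_cancel, Units.val_one, one_mul, ZMod.natCast_rightInverse ((u i : ZMod p))]
    obtain ⟨rfl, -⟩ := h
    rfl
  · rw [if_neg h, if_neg h, hmuap, ← mul_assoc, ← Units.val_mul,
      mul_inv_cancel, Units.val_one, one_mul]

lemma diagPerm_conj_mem [Fact p.Prime] (u : Fin n → (ZMod p)ˣ) :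
    ∀ h ∈ PSyl p n, diagPerm p n u * h * (diagPerm p n u)⁻¹ ∈ PSyl p n := by
  intro h hh
  refine Subgroup.closure_induction ?_ ?_ ?_ ?_ hh
  · rintro x ⟨i, rfl⟩
    rw [diagPerm_conj_sigma]
    exact pow_mem (sigmaPerm_mem p n i) _
  · rw [mul_one, mul_inv_cancel]
    exact one_mem _
  · intro x y _ _ hx hy
    have e : diagPerm p n u * (x * y) * (diagPerm p n u)⁻¹ =
        (diagPerm p n u * x * (diagPerm p n u)⁻¹) *
          (diagPerm p n u * y * (diagPerm p n u)⁻¹) := by group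
    rw [e]
    exact mul_mem hx hy
  · intro x _ hx
    have e : diagPerm p n u * x⁻¹ * (diagPerm p n u)⁻¹ =
        (diagPerm p n u * x * (diagPerm p n u)⁻¹)⁻¹ := by group
    rw [e]
    exact inv_mem hx

lemma diagPerm_mem_normalizer [Fact p.Prime] (u : Fin n → (ZMod p)ˣ) :
    diagPerm p n u ∈ Subgroup.normalizer (PSyl p n : Set (Equiv.Perm (Fin n → ZMod p))) := by
  rw [Subgroup.mem_normalizer_iff]
  intro h
  constructor
  · exact diagPerm_conj_mem p n u h
  · intro hmem
    have := diagPerm_conj_mem p n u⁻¹ _ hmem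
    rw [← diagPerm_inv] at this
    have e : (diagPerm p n u)⁻¹ * (diagPerm p n u * h * (diagPerm p n u)⁻¹) *
        ((diagPerm p n u)⁻¹)⁻¹ = h := by group
    rwa [e] at this

end Diag

section Card

lemma blockMap_mem [Fact p.Prime] {gb : Equiv.Perm (Fin n → ZMod p)} (hgb : gb ∈ PSyl p n)
    (f : (Fin n → ZMod p) → ZMod p) : blockMap p n gb f ∈ PSyl p (n + 1) := by
  obtain ⟨f0, hf0⟩ := exists_lift p n hgb
  have e : blockMap p n gb f = blockMap p n 1 ((f - f0) ∘ ⇑gb⁻¹) * blockMap p n gb f0 := by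
    rw [blockMap_mul, one_mul]
    congr 1
    funext nu
    simp only [Pi.add_apply, Function.comp_apply, Equiv.Perm.inv_apply_self, Pi.sub_apply]
    ring
  rw [e]
  exact mul_mem (blockMap_one_mem p n _) hf0

lemma card_PSyl [Fact p.Prime] : ∀ N : ℕ, ∃ m : ℕ, Nat.card (PSyl p N) = p ^ m := by
  intro N
  induction N with
  | zero =>
    refine ⟨0, ?_⟩
    rw [pow_zero]
    haveI : Subsingleton (Equiv.Perm (Fin 0 → ZMod p)) :=
      ⟨fun a b => Equiv.ext fun lam => Subsingleton.elim _ _⟩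
    haveI : Subsingleton ↥(PSyl p 0) := ⟨fun a b => Subtype.ext (Subsingleton.elim _ _)⟩
    exact Nat.card_eq_one_iff_unique.mpr ⟨inferInstance, ⟨1⟩⟩
  | succ N ih =>
    obtain ⟨m, hm⟩ := ih
    refine ⟨m + p ^ N, ?_⟩
    have e : ↥(PSyl p N) × ((Fin N → ZMod p) → ZMod p) ≃ ↥(PSyl p (N + 1)) := by
      refine Equiv.ofBijective
        (fun x => ⟨blockMap p N (x.1 : Equiv.Perm (Fin N → ZMod p)) x.2,
          blockMap_mem p N x.1.2 x.2⟩) ⟨?_, ?_⟩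
      · rintro ⟨⟨g1, h1⟩, f1⟩ ⟨⟨g2, h2⟩, f2⟩ h
        have h' := blockMap_injective p N (congrArg Subtype.val h)
        simp only [Prod.mk.injEq, Subtype.mk.injEq]
        exact ⟨h'.1, h'.2⟩
      · rintro ⟨g, hg⟩
        obtain ⟨gb, hgb, f, rfl⟩ := structure_of_mem p N hg
        exact ⟨(⟨gb, hgb⟩, f), rfl⟩
    have hcard := Nat.card_congr e
    rw [Nat.card_prod, hm] at hcard
    have hfun : Nat.card ((Fin N → ZMod p) → ZMod p) = p ^ p ^ N := by
      rw [Nat.card_fun, Nat.card_zmod, Nat.card_fun, Nat.card_zmod,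
        Nat.card_eq_fintype_card, Fintype.card_fin]
    rw [hfun] at hcard
    rw [← hcard, pow_add]

end Card

section Main

lemma zero_snoc : (0 : Fin (n + 1) → ZMod p) = Fin.snoc (0 : Fin n → ZMod p) (0 : ZMod p) := by
  funext k
  induction k using Fin.lastCases with
  | last => rw [Fin.snoc_last]; rfl
  | cast k => rw [Fin.snoc_castSucc]; rfl

lemma mem_block_iff [Fact p.Prime] (x : Fin (n + 1) → ZMod p) :
    Fin.init x = 0 ↔ ∀ g ∈ PSyl p (n + 1), g 0 = 0 → g x = x := by
  constructor
  · intro hx g hg hg0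
    obtain ⟨gb, hgb, f, rfl⟩ := structure_of_mem p n hg
    rw [zero_snoc, blockMap_apply_snoc] at hg0
    have h1 : gb 0 = 0 := by
      have := congrArg Fin.init hg0
      rwa [Fin.init_snoc, Fin.init_snoc] at this
    have h2 : f 0 = 0 := by
      have := congrFun hg0 (Fin.last n)
      rwa [Fin.snoc_last, Fin.snoc_last, zero_add] at this
    conv_lhs => rw [← Fin.snoc_init_self x, hx]
    rw [blockMap_apply_snoc, h1, h2, add_zero, ← hx, Fin.snoc_init_self]
  · intro H
    by_contra hne
    have hg : blockMap p n 1 (Pi.single (Fin.init x) 1) ∈ PSyl p (n + 1) :=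
      blockMap_one_mem p n _
    have hg0 : blockMap p n 1 (Pi.single (Fin.init x) 1) 0 = 0 := by
      rw [zero_snoc, blockMap_apply_snoc, Equiv.Perm.one_apply]
      congr 1
      rw [Pi.single_apply, if_neg (fun h => hne h.symm), add_zero]
    have hfix := H _ hg hg0
    rw [blockMap_apply, Equiv.Perm.one_apply, Pi.single_eq_same] at hfix
    have hlast := congrFun hfix (Fin.last n)
    rw [Fin.snoc_last] at hlast
    exact one_ne_zero (add_eq_left.mp hlast)

lemma normalizer_le [Fact p.Prime] :
    ∀ N : ℕ, ∀ tau : Equiv.Perm (Fin N → ZMod p), tau ∈ Subgroup.normalizer (PSyl p N : Set (Equiv.Perm (Fin N → ZMod p))) →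
      ∃ a ∈ PSyl p N, ∃ v : Fin N → (ZMod p)ˣ, tau = a * diagPerm p N v := by
  intro N
  induction N with
  | zero =>
    intro tau _
    haveI : Subsingleton (Equiv.Perm (Fin 0 → ZMod p)) :=
      ⟨fun a b => Equiv.ext fun lam => Subsingleton.elim _ _⟩
    exact ⟨1, one_mem _, 1, Subsingleton.elim _ _⟩
  | succ n IH =>
    intro tau htau
    have conjmem : ∀ T : Equiv.Perm (Fin (n + 1) → ZMod p), T ∈ Subgroup.normalizer (PSyl p (n + 1) : Set (Equiv.Perm (Fin (n + 1) → ZMod p))) →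
        ∀ g ∈ PSyl p (n + 1), T * g * T⁻¹ ∈ PSyl p (n + 1) := fun T hT g hg =>
      (Subgroup.mem_normalizer_iff.mp hT g).mp hg
    -- Step 1 : arrange that 0 is fixed
    obtain ⟨g1, hg1, hg10⟩ := exists_elem_zero p (n + 1) (tau 0)
    set t1 : Equiv.Perm (Fin (n + 1) → ZMod p) := g1⁻¹ * tau with ht1def
    have ht1N : t1 ∈ Subgroup.normalizer (PSyl p (n + 1) : Set (Equiv.Perm (Fin (n + 1) → ZMod p))) :=
      mul_mem (inv_mem (Subgroup.le_normalizer hg1)) htau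
    have ht10 : t1 0 = 0 := by
      rw [ht1def, Equiv.Perm.mul_apply, ← hg10, Equiv.Perm.inv_apply_self]
    suffices hsuff : ∃ a ∈ PSyl p (n + 1), ∃ v, t1 = a * diagPerm p (n + 1) v by
      obtain ⟨a, ha, v, hv⟩ := hsuff
      refine ⟨g1 * a, mul_mem hg1 ha, v, ?_⟩
      rw [mul_assoc, ← hv, ht1def, ← mul_assoc, mul_inv_cancel, one_mul]
    -- Step 2 : block preservation
    have block0 : ∀ T : Equiv.Perm (Fin (n + 1) → ZMod p),
        T ∈ Subgroup.normalizer (PSyl p (n + 1) : Set (Equiv.Perm (Fin (n + 1) → ZMod p))) → T 0 = 0 →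
        ∀ x, Fin.init x = 0 → Fin.init (T x) = 0 := by
      intro T hT hT0 x hx
      have hTinv0 : T⁻¹ 0 = 0 := by
        apply T.injective
        rw [Equiv.Perm.apply_inv_self, hT0]
      rw [mem_block_iff]
      intro g hg hg0
      have h1 := (Subgroup.mem_normalizer_iff.mp (inv_mem hT) g).mp hg
      rw [inv_inv] at h1
      have h2 : (T⁻¹ * g * T) 0 = 0 := by
        simp only [Equiv.Perm.mul_apply]
        rw [hT0, hg0, hTinv0]
      have h3 := (mem_block_iff p n x).mp hx _ h1 h2
      have h4 := congrArg T h3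
      simp only [Equiv.Perm.mul_apply, Equiv.Perm.apply_inv_self] at h4
      exact h4
    have blocks : ∀ T : Equiv.Perm (Fin (n + 1) → ZMod p),
        T ∈ Subgroup.normalizer (PSyl p (n + 1) : Set (Equiv.Perm (Fin (n + 1) → ZMod p))) → T 0 = 0 →
        ∀ x y, Fin.init x = Fin.init y → Fin.init (T x) = Fin.init (T y) := by
      intro T hT hT0 x y hxy
      obtain ⟨gb, hgb, hgb0⟩ := exists_elem_zero p n (Fin.init x)
      obtain ⟨f, hf⟩ := exists_lift p n hgb
      have hgx : Fin.init ((blockMap p n gb f)⁻¹ x) = 0 := by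
        rw [blockMap_inv, blockMap_apply, Fin.init_snoc, ← hgb0, Equiv.Perm.inv_apply_self]
      have hgy : Fin.init ((blockMap p n gb f)⁻¹ y) = 0 := by
        rw [blockMap_inv, blockMap_apply, Fin.init_snoc, ← hxy, ← hgb0,
          Equiv.Perm.inv_apply_self]
      have hTg := conjmem T hT _ hf
      obtain ⟨hb, hhb, fh, hdec⟩ := structure_of_mem p n hTg
      have ex : ∀ z : Fin (n + 1) → ZMod p,
          T z = (T * blockMap p n gb f * T⁻¹) (T ((blockMap p n gb f)⁻¹ z)) := by
        intro z
        simp only [Equiv.Perm.mul_apply, Equiv.Perm.inv_apply_self, Equiv.Perm.apply_inv_self]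
      rw [ex x, ex y, hdec, blockMap_apply, blockMap_apply, Fin.init_snoc, Fin.init_snoc,
        block0 T hT hT0 _ hgx, block0 T hT hT0 _ hgy]
    -- the quotient permutation of t1
    have ht1i0 : t1⁻¹ 0 = 0 := by
      apply t1.injective
      rw [Equiv.Perm.apply_inv_self, ht10]
    set tb : (Fin n → ZMod p) → Fin n → ZMod p :=
      fun mu => Fin.init (t1 (Fin.snoc mu 0)) with htbdef
    set tbi : (Fin n → ZMod p) → Fin n → ZMod p :=
      fun mu => Fin.init (t1⁻¹ (Fin.snoc mu 0)) with htbidef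
    have htb : ∀ x, Fin.init (t1 x) = tb (Fin.init x) := by
      intro x
      exact blocks t1 ht1N ht10 x (Fin.snoc (Fin.init x) 0) (by rw [Fin.init_snoc])
    have htbi : ∀ x, Fin.init (t1⁻¹ x) = tbi (Fin.init x) := by
      intro x
      exact blocks t1⁻¹ (inv_mem ht1N) ht1i0 x (Fin.snoc (Fin.init x) 0) (by rw [Fin.init_snoc])
    have hlr : ∀ mu, tbi (tb mu) = mu := by
      intro mu
      have := htbi (t1 (Fin.snoc mu 0))
      rw [Equiv.Perm.inv_apply_self, Fin.init_snoc] at this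
      exact this.symm
    have hrl : ∀ mu, tb (tbi mu) = mu := by
      intro mu
      have := htb (t1⁻¹ (Fin.snoc mu 0))
      rw [Equiv.Perm.apply_inv_self, Fin.init_snoc] at this
      exact this.symm
    set tbar : Equiv.Perm (Fin n → ZMod p) := ⟨tb, tbi, hlr, hrl⟩ with htbardef
    -- the within-block maps
    set s : (Fin n → ZMod p) → ZMod p → ZMod p :=
      fun mu x => t1 (Fin.snoc mu x) (Fin.last n) with hsdef
    have ht1snoc : ∀ mu x, t1 (Fin.snoc mu x) = Fin.snoc (tb mu) (s mu x) := by
      intro mu x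
      have h1 : Fin.init (t1 (Fin.snoc mu x)) = tb mu := by
        rw [htb, Fin.init_snoc]
      conv_lhs => rw [← Fin.snoc_init_self (t1 (Fin.snoc mu x))]
      rw [h1]
    -- conjugates of block translations are block translations
    have conjC : ∀ (mu : Fin n → ZMod p) (a : ZMod p),
        ∃ fh : (Fin n → ZMod p) → ZMod p,
          t1 * blockMap p n 1 (Pi.single mu a) * t1⁻¹ = blockMap p n 1 fh := by
      intro mu a
      have hmem := conjmem t1 ht1N _ (blockMap_one_mem p n (Pi.single mu a))
      obtain ⟨hb, hhb, fh, hdec⟩ := structure_of_mem p n hmem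
      have hb1 : hb = 1 := by
        apply Equiv.ext
        intro nu
        have e := Equiv.ext_iff.mp hdec (Fin.snoc nu 0)
        have eL : Fin.init ((t1 * blockMap p n 1 (Pi.single mu a) * t1⁻¹) (Fin.snoc nu 0))
            = nu := by
          simp only [Equiv.Perm.mul_apply]
          rw [htb, blockMap_apply, Fin.init_snoc, Equiv.Perm.one_apply, htbi, Fin.init_snoc,
            hrl]
        have eR : Fin.init (blockMap p n hb fh (Fin.snoc nu 0)) = hb nu := by
          rw [blockMap_apply_snoc, Fin.init_snoc]
        rw [e] at eL
        rw [eL] at eR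
        rw [← eR]
        rfl
      exact ⟨fh, by rwa [hb1] at hdec⟩
    have transl : ∀ (mu : Fin n → ZMod p) (a : ZMod p), ∃ b : ZMod p,
        ∀ x, s mu (x + a) = s mu x + b := by
      intro mu a
      obtain ⟨fh, hdec⟩ := conjC mu a
      refine ⟨fh (tb mu), ?_⟩
      intro x
      have e := Equiv.ext_iff.mp hdec (t1 (Fin.snoc mu x))
      simp only [Equiv.Perm.mul_apply, Equiv.Perm.inv_apply_self] at e
      rw [blockMap_apply_snoc, Equiv.Perm.one_apply, Pi.single_eq_same] at e
      rw [ht1snoc mu (x + a), ht1snoc mu x, blockMap_apply_snoc, Equiv.Perm.one_apply] at e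
      have := congrFun e (Fin.last n)
      rwa [Fin.snoc_last, Fin.snoc_last] at this
    have bunit : ∀ mu : Fin n → ZMod p, ∃ b : ZMod p, b ≠ 0 ∧
        ∀ x, s mu (x + 1) = s mu x + b := by
      intro mu
      obtain ⟨b, hb⟩ := transl mu 1
      refine ⟨b, ?_, hb⟩
      intro hb0
      have h1 := hb 0
      rw [hb0, add_zero, zero_add] at h1
      have e : t1 (Fin.snoc mu 1) = t1 (Fin.snoc mu 0) := by
        rw [ht1snoc, ht1snoc, h1]
      have := congrFun (t1.injective e) (Fin.last n)
      rw [Fin.snoc_last, Fin.snoc_last] at this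
      exact one_ne_zero this
    have lin : ∀ (mu : Fin n → ZMod p) (b : ZMod p),
        (∀ x, s mu (x + 1) = s mu x + b) → ∀ x, s mu x = s mu 0 + b * x := by
      intro mu b hstep
      have hm : ∀ m : ℕ, s mu (m : ZMod p) = s mu 0 + b * (m : ZMod p) := by
        intro m
        induction m with
        | zero => simp
        | succ m ihm =>
          push_cast
          rw [hstep, ihm]
          ring
      intro x
      have := hm x.val
      rwa [ZMod.natCast_rightInverse x] at this
    obtain ⟨b0, hb0ne, hb0⟩ := bunit 0
    have hlin0 := lin 0 b0 hb0
    have bconst : ∀ mu : Fin n → ZMod p, ∀ x, s mu x = s mu 0 + b0 * x := by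
      intro mu
      obtain ⟨b, hbne, hb⟩ := bunit mu
      have hlinmu := lin mu b hb
      obtain ⟨gb, hgb, hgb0⟩ := exists_elem_zero p n mu
      obtain ⟨fg, hfg⟩ := exists_lift p n hgb
      have hconj := conjmem t1 ht1N _ hfg
      obtain ⟨hbb, hhbb, fh, hdec⟩ := structure_of_mem p n hconj
      have key : ∀ x : ZMod p, s mu (x + fg 0) = s 0 x + fh (tb 0) := by
        intro x
        have e := Equiv.ext_iff.mp hdec (t1 (Fin.snoc (0 : Fin n → ZMod p) x))
        simp only [Equiv.Perm.mul_apply, Equiv.Perm.inv_apply_self] at e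
        rw [blockMap_apply_snoc, hgb0, ht1snoc, ht1snoc, blockMap_apply_snoc] at e
        have := congrFun e (Fin.last n)
        rwa [Fin.snoc_last, Fin.snoc_last] at this
      have E : ∀ x : ZMod p, s mu 0 + b * x + b * fg 0 = (s 0 0 + fh (tb 0)) + b0 * x := by
        intro x
        have hk := key x
        rw [hlinmu, hlin0] at hk
        linear_combination hk
      have hbb0 : b = b0 := by linear_combination E 1 - E 0
      intro x
      rw [← hbb0]
      exact hlinmu x
    -- assemble : t1 = blockMap tbar fstar * E0
    set u0 : (ZMod p)ˣ := Units.mk0 b0 hb0ne with hu0def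
    set fstar : (Fin n → ZMod p) → ZMod p := fun mu => s mu 0 with hfstardef
    have hEapp : ∀ lam : Fin (n + 1) → ZMod p,
        diagPerm p (n + 1) (Function.update 1 (Fin.last n) u0) lam
          = Fin.snoc (Fin.init lam) (b0 * lam (Fin.last n)) := by
      intro lam
      rw [diagPerm_apply]
      funext k
      induction k using Fin.lastCases with
      | last =>
        rw [Fin.snoc_last, Function.update_self]
        rfl
      | cast k =>
        rw [Fin.snoc_castSucc, Function.update_of_ne (Fin.castSucc_lt_last k).ne, init_apply]
        simp
    have hdecomp1 : t1 = blockMap p n tbar fstar *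
        diagPerm p (n + 1) (Function.update 1 (Fin.last n) u0) := by
      apply Equiv.ext
      intro lam
      conv_rhs => rw [Equiv.Perm.mul_apply, hEapp, blockMap_apply_snoc]
      conv_lhs => rw [← Fin.snoc_init_self lam, ht1snoc, bconst]
      have htbeq : tbar (Fin.init lam) = tb (Fin.init lam) := rfl
      rw [htbeq, add_comm (b0 * lam (Fin.last n))]
    set t2 : Equiv.Perm (Fin (n + 1) → ZMod p) := blockMap p n tbar fstar with ht2def
    have ht2N : t2 ∈ Subgroup.normalizer (PSyl p (n + 1) : Set (Equiv.Perm (Fin (n + 1) → ZMod p))) := by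
      have e : t2 = t1 * (diagPerm p (n + 1) (Function.update 1 (Fin.last n) u0))⁻¹ := by
        rw [hdecomp1, mul_assoc, mul_inv_cancel, mul_one]
      rw [e]
      exact mul_mem ht1N (inv_mem (diagPerm_mem_normalizer p (n + 1) _))
    -- tbar normalizes PSyl p n
    have conjbar : ∀ (T : Equiv.Perm (Fin (n + 1) → ZMod p)) (Tb : Equiv.Perm (Fin n → ZMod p))
        (fT : (Fin n → ZMod p) → ZMod p), T ∈ Subgroup.normalizer (PSyl p (n + 1) : Set (Equiv.Perm (Fin (n + 1) → ZMod p))) →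
        T = blockMap p n Tb fT → ∀ hb ∈ PSyl p n, Tb * hb * Tb⁻¹ ∈ PSyl p n := by
      intro T Tb fT hT hTd hb hhb
      obtain ⟨fg, hfg⟩ := exists_lift p n hhb
      have hc := conjmem T hT _ hfg
      obtain ⟨kb, hkb, fk, hdec⟩ := structure_of_mem p n hc
      rw [hTd, blockMap_inv, blockMap_mul, blockMap_mul] at hdec
      obtain ⟨h1, -⟩ := blockMap_injective p n hdec
      rw [h1]
      exact hkb
    have htbarN : tbar ∈ Subgroup.normalizer (PSyl p n : Set (Equiv.Perm (Fin n → ZMod p))) := by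
      rw [Subgroup.mem_normalizer_iff]
      intro hb
      constructor
      · intro hhb
        exact conjbar t2 tbar fstar ht2N ht2def hb hhb
      · intro hhb
        have h2d : t2⁻¹ = blockMap p n tbar⁻¹ (fun mu => -(fstar (tbar⁻¹ mu))) :=
          blockMap_inv p n tbar fstar
        have := conjbar t2⁻¹ tbar⁻¹ _ (inv_mem ht2N) h2d _ hhb
        have e : tbar⁻¹ * (tbar * hb * tbar⁻¹) * tbar⁻¹⁻¹ = hb := by group
        rwa [e] at this
    -- apply induction hypothesis and lift
    obtain ⟨ab, hab, v, hv⟩ := IH tbar htbarN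
    obtain ⟨fa, hfa⟩ := exists_lift p n hab
    set dv : Equiv.Perm (Fin n → ZMod p) := diagPerm p n v with hdvdef
    have hsplit : t2 = blockMap p n ab fa *
        blockMap p n 1 (fun w => fstar (dv⁻¹ w) - fa w) * blockMap p n dv 0 := by
      rw [blockMap_mul, blockMap_mul]
      rw [ht2def, hv]
      have hg2 : ab * 1 * dv = ab * dv := by rw [mul_one]
      have hf2 : ((0 : (Fin n → ZMod p) → ZMod p) +
          ((fun w => fstar (dv⁻¹ w) - fa w) + fa ∘ ⇑(1 : Equiv.Perm (Fin n → ZMod p))) ∘ ⇑dv)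
          = fstar := by
        funext nu
        simp only [Pi.add_apply, Function.comp_apply, Equiv.Perm.coe_one, id_eq,
          Equiv.Perm.inv_apply_self, Pi.zero_apply, zero_add]
        ring
      rw [hg2, hf2]
    have hdvsnoc : blockMap p n dv 0 = diagPerm p (n + 1) (Fin.snoc v (1 : (ZMod p)ˣ)) := by
      apply Equiv.ext
      intro lam
      funext k
      rw [blockMap_apply, diagPerm_apply p (n + 1) (Fin.snoc v (1 : (ZMod p)ˣ)) lam]
      induction k using Fin.lastCases with
      | last =>
        simp only [Fin.snoc_last, Pi.zero_apply, add_zero, Units.val_one, one_mul]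
      | cast k =>
        simp only [Fin.snoc_castSucc, hdvdef, diagPerm_apply, init_apply]
    refine ⟨blockMap p n ab fa * blockMap p n 1 (fun w => fstar (dv⁻¹ w) - fa w),
      mul_mem (blockMap_mem p n hab fa) (blockMap_one_mem p n _),
      Fin.snoc v (1 : (ZMod p)ˣ) *
        Function.update (1 : Fin (n + 1) → (ZMod p)ˣ) (Fin.last n) u0, ?_⟩
    rw [diagPerm_mul, hdecomp1, hsplit, hdvsnoc, mul_assoc]

end Main

section Assembly

/-- The diagonal scaling homomorphism. -/
def diagHom : (Fin n → (ZMod p)ˣ) →* Equiv.Perm (Fin n → ZMod p) where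
  toFun := diagPerm p n
  map_one' := diagPerm_one p n
  map_mul' := fun u v => diagPerm_mul p n u v

lemma etaPerm_eq (r : (ZMod p)ˣ) (i : Fin n) :
    etaPerm p n r i = diagPerm p n (Pi.mulSingle i r) := by
  apply Equiv.ext
  intro lam
  funext k
  show (if k = i then (r : ZMod p) * lam k else lam k)
      = (((Pi.mulSingle i r : Fin n → (ZMod p)ˣ) k : (ZMod p)ˣ) : ZMod p) * lam k
  by_cases hk : k = i
  · subst hk
    rw [if_pos rfl, Pi.mulSingle_eq_same]
  · rw [if_neg hk, Pi.mulSingle_eq_of_ne hk, Units.val_one, one_mul]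

lemma mulSingle_zpow (i : Fin n) (r : (ZMod p)ˣ) (m : ℤ) :
    Pi.mulSingle i (r ^ m) = (Pi.mulSingle i r : Fin n → (ZMod p)ˣ) ^ m := by
  funext j
  rw [Pi.pow_apply]
  by_cases hj : j = i
  · subst hj
    rw [Pi.mulSingle_eq_same, Pi.mulSingle_eq_same]
  · rw [Pi.mulSingle_eq_of_ne hj, Pi.mulSingle_eq_of_ne hj, one_zpow]

lemma closure_eta_eq [Fact p.Prime] (r : (ZMod p)ˣ)
    (hr : ∀ s : (ZMod p)ˣ, s ∈ Subgroup.zpowers r) :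
    Subgroup.closure (Set.range (etaPerm p n r)) = (diagHom p n).range := by
  apply le_antisymm
  · rw [Subgroup.closure_le]
    rintro x ⟨i, rfl⟩
    exact ⟨Pi.mulSingle i r, (etaPerm_eq p n r i).symm⟩
  · rintro x ⟨u, rfl⟩
    have hu : u = (List.ofFn (fun i => (Pi.mulSingle i (u i) : Fin n → (ZMod p)ˣ))).prod := by
      rw [List.prod_ofFn]
      exact (Finset.univ_prod_mulSingle u).symm
    rw [hu, MonoidHom.map_list_prod]
    apply Subgroup.list_prod_mem
    intro x hx
    obtain ⟨y, hy, rfl⟩ := List.mem_map.mp hx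
    obtain ⟨i, rfl⟩ := List.mem_ofFn.mp hy
    obtain ⟨m, hm⟩ := Subgroup.mem_zpowers_iff.mp (hr (u i))
    beta_reduce
    rw [← hm, mulSingle_zpow, map_zpow]
    refine zpow_mem (Subgroup.subset_closure ?_) m
    exact ⟨i, etaPerm_eq p n r i⟩

end Assembly
/-- Let `r` be a generator of `(ZMod p)ˣ` and `H = ⟨η_0, …, η_{n-1}⟩`.  Then `H` is
isomorphic to the direct product of `n` copies of the cyclic group `C_{p-1}`, `H`
normalizes `P_n`, and `H` is a Hall `p'`-subgroup of the normalizer of `P_n` in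
`Sym(F_p^n)` (its order is coprime to `p` and its index in the normalizer is a
power of `p`). -/
theorem etaSubgroup_hall (hp : p.Prime) (hn : 1 ≤ n)
    (r : (ZMod p)ˣ) (hr : ∀ s : (ZMod p)ˣ, s ∈ Subgroup.zpowers r) :
    Nonempty (↥(Subgroup.closure (Set.range (etaPerm p n r)))
        ≃* (Fin n → Multiplicative (ZMod (p - 1)))) ∧
    Subgroup.closure (Set.range (etaPerm p n r)) ≤ Subgroup.normalizer (PSyl p n : Set (Equiv.Perm (Fin n → ZMod p))) ∧
    (Nat.card ↥(Subgroup.closure (Set.range (etaPerm p n r)))).Coprime p ∧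
    (∃ m : ℕ, ((Subgroup.closure (Set.range (etaPerm p n r))).subgroupOf
        (Subgroup.normalizer (PSyl p n : Set (Equiv.Perm (Fin n → ZMod p))))).index = p ^ m) := by
  haveI : Fact p.Prime := ⟨hp⟩
  haveI : NeZero (p - 1) := ⟨by have := hp.two_le; omega⟩
  have hHeq := closure_eta_eq p n r hr
  have hcardu : Fintype.card (ZMod p)ˣ = p - 1 := by
    rw [ZMod.card_units_eq_totient, Nat.totient_prime hp]
  have htop : Subgroup.zpowers r = ⊤ := (Subgroup.eq_top_iff' _).mpr hr
  have horder : orderOf r = p - 1 := by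
    have h1 := Nat.card_zpowers r
    rw [htop, Subgroup.card_top, Nat.card_eq_fintype_card, hcardu] at h1
    exact h1.symm
  have hpowmod : ∀ k : ℕ, r ^ (k % (p - 1)) = r ^ k := by
    intro k
    conv_lhs => rw [← horder]
    exact pow_mod_orderOf r k
  set φ : Multiplicative (ZMod (p - 1)) →* (ZMod p)ˣ :=
    { toFun := fun z => r ^ (Multiplicative.toAdd z).val
      map_one' := by
        show r ^ (Multiplicative.toAdd (1 : Multiplicative (ZMod (p - 1)))).val = 1
        rw [toAdd_one, ZMod.val_zero, pow_zero]
      map_mul' := by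
        intro a b
        show r ^ (Multiplicative.toAdd (a * b)).val = _
        rw [toAdd_mul, ZMod.val_add, hpowmod, pow_add] } with hφdef
  have hφinj : Function.Injective φ := by
    intro a b h
    have h2 : (Multiplicative.toAdd a).val ≡ (Multiplicative.toAdd b).val [MOD orderOf r] :=
      pow_eq_pow_iff_modEq.mp h
    rw [horder] at h2
    have h3 : (Multiplicative.toAdd a).val = (Multiplicative.toAdd b).val := by
      have l1 := ZMod.val_lt (Multiplicative.toAdd a)
      have l2 := ZMod.val_lt (Multiplicative.toAdd b)
      unfold Nat.ModEq at h2
      rwa [Nat.mod_eq_of_lt l1, Nat.mod_eq_of_lt l2] at h2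
    have h4 := ZMod.natCast_rightInverse.injective h3
    exact Multiplicative.toAdd.injective h4
  have cM : Nat.card (Multiplicative (ZMod (p - 1))) = p - 1 :=
    (Nat.card_congr (by exact Multiplicative.toAdd)).trans (Nat.card_zmod _)
  have hφbij : Function.Bijective φ := by
    rw [Fintype.bijective_iff_injective_and_card]
    refine ⟨hφinj, ?_⟩
    rw [← Nat.card_eq_fintype_card, cM, hcardu]
  have e3 : (ZMod p)ˣ ≃* Multiplicative (ZMod (p - 1)) := (MulEquiv.ofBijective φ hφbij).symm
  have e2 : (Fin n → (ZMod p)ˣ) ≃* ↥((diagHom p n).range) :=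
    MonoidHom.ofInjective (fun a b h => diagPerm_injective p n h)
  have e1 : ↥(Subgroup.closure (Set.range (etaPerm p n r))) ≃* ↥((diagHom p n).range) :=
    MulEquiv.subgroupCongr hHeq
  have eH : ↥(Subgroup.closure (Set.range (etaPerm p n r)))
      ≃* (Fin n → Multiplicative (ZMod (p - 1))) :=
    e1.trans (e2.symm.trans (MulEquiv.piCongrRight fun _ => e3))
  have hcardH : Nat.card ↥(Subgroup.closure (Set.range (etaPerm p n r))) = (p - 1) ^ n := by
    rw [Nat.card_congr eH.toEquiv, Nat.card_fun, cM, Nat.card_eq_fintype_card, Fintype.card_fin]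
  have hle : Subgroup.closure (Set.range (etaPerm p n r)) ≤ Subgroup.normalizer (PSyl p n : Set (Equiv.Perm (Fin n → ZMod p))) := by
    intro x hx
    rw [hHeq] at hx
    obtain ⟨u, rfl⟩ := hx
    exact diagPerm_mem_normalizer p n u
  have hco : Nat.Coprime (p - 1) p := by
    refine (Nat.Prime.coprime_iff_not_dvd hp).mpr ?_ |>.symm
    intro hd
    have h2 := Nat.le_of_dvd (by have := hp.two_le; omega) hd
    have := hp.two_le
    omega
  refine ⟨⟨eH⟩, hle, ?_, ?_⟩
  · rw [hcardH]
    exact Nat.Coprime.pow_left n hco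
  · obtain ⟨m, hm⟩ := card_PSyl p n
    refine ⟨m, ?_⟩
    have hPle : PSyl p n ≤ Subgroup.normalizer (PSyl p n : Set (Equiv.Perm (Fin n → ZMod p))) := Subgroup.le_normalizer
    have hint : ∀ g, g ∈ PSyl p n → g ∈ Subgroup.closure (Set.range (etaPerm p n r)) → g = 1 := by
      intro g hgP hgH
      have d1 := Subgroup.orderOf_dvd_natCard _ hgP
      have d2 := Subgroup.orderOf_dvd_natCard _ hgH
      rw [hm] at d1
      rw [hcardH] at d2
      have hco2 : Nat.Coprime (p ^ m) ((p - 1) ^ n) := Nat.Coprime.pow m n hco.symm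
      have h1 : orderOf g ∣ 1 := hco2.gcd_eq_one ▸ Nat.dvd_gcd d1 d2
      exact orderOf_eq_one_iff.mp (Nat.dvd_one.mp h1)
    have hb : Function.Bijective
        (fun x : ↥(PSyl p n) × ↥(Subgroup.closure (Set.range (etaPerm p n r))) =>
          (⟨(x.1 : Equiv.Perm (Fin n → ZMod p)) * (x.2 : Equiv.Perm (Fin n → ZMod p)),
            mul_mem (hPle x.1.2) (hle x.2.2)⟩ : ↥(Subgroup.normalizer (PSyl p n : Set (Equiv.Perm (Fin n → ZMod p)))))) := by
      constructor
      · rintro ⟨⟨a, ha⟩, ⟨d, hd⟩⟩ ⟨⟨a', ha'⟩, ⟨d', hd'⟩⟩ h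
        have h1 : a * d = a' * d' := congrArg Subtype.val h
        have hg : a'⁻¹ * a = d' * d⁻¹ := by
          have e1 : (a'⁻¹ * a) * d = d' := by
            rw [mul_assoc, h1, ← mul_assoc, inv_mul_cancel, one_mul]
          have e2 : (d' * d⁻¹) * d = d' := by
            rw [mul_assoc, inv_mul_cancel, mul_one]
          exact mul_right_cancel (e1.trans e2.symm)
        have hone := hint _ (mul_mem (inv_mem ha') ha) (hg ▸ mul_mem hd' (inv_mem hd))
        have ea : a = a' := (inv_mul_eq_one.mp hone).symm
        have ed : d = d' := by
          rw [hg] at hone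
          exact (mul_inv_eq_one.mp hone).symm
        simp only [Prod.mk.injEq, Subtype.mk.injEq]
        exact ⟨ea, ed⟩
      · rintro ⟨x, hx⟩
        obtain ⟨a, ha, v, hv⟩ := normalizer_le p n x hx
        refine ⟨(⟨a, ha⟩, ⟨diagPerm p n v, ?_⟩), ?_⟩
        · rw [hHeq]
          exact ⟨v, rfl⟩
        · exact Subtype.ext hv.symm
    have hcardN : Nat.card ↥(Subgroup.normalizer (PSyl p n : Set (Equiv.Perm (Fin n → ZMod p)))) = p ^ m * (p - 1) ^ n := by
      rw [← Nat.card_eq_of_bijective _ hb, Nat.card_prod, hm, hcardH]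
    have hidx := Subgroup.index_mul_card
      ((Subgroup.closure (Set.range (etaPerm p n r))).subgroupOf (Subgroup.normalizer (PSyl p n : Set (Equiv.Perm (Fin n → ZMod p)))))
    rw [hcardN] at hidx
    have hcsub : Nat.card
        ↥((Subgroup.closure (Set.range (etaPerm p n r))).subgroupOf (Subgroup.normalizer (PSyl p n : Set (Equiv.Perm (Fin n → ZMod p)))))
        = (p - 1) ^ n := by
      rw [Nat.card_congr (Subgroup.subgroupOfEquivOfLe hle).toEquiv, hcardH]
    rw [hcsub] at hidx
    have hpos : 0 < (p - 1) ^ n := Nat.pow_pos (n := n) (by have := hp.two_le; omega)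
    exact Nat.eq_of_mul_eq_mul_right hpos hidx
end

section
/- Let p be a prime, P a finite p-group, and M a nonzero F_p P-module on which P acts uniserially. Then there exists an element a_0 of the group algebra F_p P such that a_0·M = C_M(P) and a_0·[P,M] = 0. -/
variable (p : ℕ) (P : Type) [Group P]
variable (M : Type) [AddCommGroup M] [Module (ZMod p) M]
  [Module (MonoidAlgebra (ZMod p) P) M]
  [IsScalarTower (ZMod p) (MonoidAlgebra (ZMod p) P) M]

/-- The fixed-point subspace `C_M(P)` of an `F_p P`-module `M`. -/
def fixedPts : Submodule (ZMod p) M where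
  carrier := {m | ∀ g : P, MonoidAlgebra.of (ZMod p) P g • m = m}
  add_mem' := by
    intro a b ha hb g
    rw [smul_add, ha g, hb g]
  zero_mem' := by
    intro g
    rw [smul_zero]
  smul_mem' := by
    intro c m hm g
    rw [← algebraMap_smul (MonoidAlgebra (ZMod p) P) c m, ← mul_smul, ← Algebra.commutes,
      mul_smul, hm g, algebraMap_smul]

/-- The submodule `[P, N]` of an `F_p P`-module `M` spanned by the elements
`g • m - m` with `g ∈ P`, `m ∈ N`. -/
noncomputable def bracketSub (N : Submodule (MonoidAlgebra (ZMod p) P) M) :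
    Submodule (MonoidAlgebra (ZMod p) P) M :=
  Submodule.span (MonoidAlgebra (ZMod p) P)
    {x | ∃ g : P, ∃ m ∈ N, x = MonoidAlgebra.of (ZMod p) P g • m - m}

/-- An `F_p P`-module `M` is uniserial if `[P, N]` has (additive) index `p` in `N`
for every nonzero submodule `N` of `M`. -/
def UniserialFpP : Prop :=
  ∀ N : Submodule (MonoidAlgebra (ZMod p) P) M, N ≠ ⊥ →
    (bracketSub p P M N).toAddSubgroup.relIndex N.toAddSubgroup = p


set_option linter.unusedSectionVars false

lemma bracketSub_le (N : Submodule (MonoidAlgebra (ZMod p) P) M) :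
    bracketSub p P M N ≤ N := by
  rw [bracketSub, Submodule.span_le]
  rintro x ⟨g, m, hm, rfl⟩
  exact sub_mem (N.smul_mem _ hm) hm

lemma bracketSub_mono {N N' : Submodule (MonoidAlgebra (ZMod p) P) M} (h : N ≤ N') :
    bracketSub p P M N ≤ bracketSub p P M N' :=
  Submodule.span_mono (by rintro x ⟨g, m, hm, rfl⟩; exact ⟨g, m, h hm, rfl⟩)

/-- fixed points as a `MonoidAlgebra`-submodule -/
def fixedSub : Submodule (MonoidAlgebra (ZMod p) P) M where
  carrier := {m | ∀ g : P, MonoidAlgebra.of (ZMod p) P g • m = m}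
  add_mem' := by intro a b ha hb g; rw [smul_add, ha g, hb g]
  zero_mem' := by intro g; rw [smul_zero]
  smul_mem' := by
    intro r m hm
    obtain ⟨c, hc⟩ : ∃ c : ZMod p, r • m = c • m := by
      induction r using MonoidAlgebra.induction_on with
      | of g => exact ⟨1, by rw [one_smul]; exact hm g⟩
      | add f g hf hg =>
          obtain ⟨c1, h1⟩ := hf; obtain ⟨c2, h2⟩ := hg
          exact ⟨c1 + c2, by rw [add_smul, h1, h2, add_smul]⟩
      | smul c f hf =>
          obtain ⟨c1, h1⟩ := hf
          exact ⟨c * c1, by rw [smul_assoc, h1, smul_smul]⟩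
    intro g
    rw [hc, smul_comm, hm g]

set_option linter.unusedSectionVars false

abbrev Rg := MonoidAlgebra (ZMod p) P

/-- J * I_j ⊆ I_{j+1} in the regular module. -/
lemma mul_mem_iterate (j : ℕ) {b a : MonoidAlgebra (ZMod p) P}
    (hb : b ∈ bracketSub p P (Rg p P) ⊤)
    (ha : a ∈ (bracketSub p P (Rg p P))^[j] ⊤) :
    b * a ∈ (bracketSub p P (Rg p P))^[j + 1] ⊤ := by
  rw [Function.iterate_succ_apply']
  induction hb using Submodule.span_induction with
  | mem x hx =>
      obtain ⟨g, m, -, rfl⟩ := hx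
      apply Submodule.subset_span
      refine ⟨g, m * a, ?_, ?_⟩
      · simpa [smul_eq_mul] using
          ((bracketSub p P (Rg p P))^[j] ⊤).smul_mem m ha
      · simp [smul_eq_mul, sub_mul, mul_assoc]
  | zero => simp
  | add x y hx hy hx' hy' => rw [add_mul]; exact add_mem hx' hy'
  | smul r x hx hx' => rw [smul_mul_assoc]; exact Submodule.smul_mem _ r hx'

/-- I_j • N_k ⊆ N_{j+k}. -/
lemma smul_mem_iterate (j k : ℕ) {a : MonoidAlgebra (ZMod p) P} {x : M}
    (ha : a ∈ (bracketSub p P (Rg p P))^[j] ⊤)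
    (hx : x ∈ (bracketSub p P M)^[k] ⊤) :
    a • x ∈ (bracketSub p P M)^[j + k] ⊤ := by
  induction j generalizing a with
  | zero => simpa using Submodule.smul_mem _ a hx
  | succ j ih =>
      rw [Function.iterate_succ_apply'] at ha
      have hjk : j + 1 + k = (j + k) + 1 := by omega
      rw [hjk, Function.iterate_succ_apply']
      induction ha using Submodule.span_induction with
      | mem b hb =>
          obtain ⟨g, m, hm, rfl⟩ := hb
          have h1 : (MonoidAlgebra.of (ZMod p) P g • m - m) • x
              = MonoidAlgebra.of (ZMod p) P g • (m • x) - m • x := by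
            rw [sub_smul, smul_eq_mul, mul_smul]
          rw [h1]
          exact Submodule.subset_span ⟨g, m • x, ih hm, rfl⟩
      | zero => simp
      | add b c hb hc hb' hc' => rw [add_smul]; exact add_mem hb' hc'
      | smul r b hb hb' => rw [smul_assoc]; exact Submodule.smul_mem _ r hb'

/-- span of `{a • m : a ∈ I_k}` -/
noncomputable def Tk (k : ℕ) : Submodule (MonoidAlgebra (ZMod p) P) M :=
  Submodule.span (MonoidAlgebra (ZMod p) P)
    {x : M | ∃ a ∈ (bracketSub p P (Rg p P))^[k] ⊤, ∃ m : M, x = a • m}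

lemma smul_Tk_mem (k : ℕ) {x : M} (hx : x ∈ Tk p P M k)
    {b : MonoidAlgebra (ZMod p) P} (hb : b ∈ bracketSub p P (Rg p P) ⊤) :
    b • x ∈ Tk p P M (k + 1) := by
  induction hx using Submodule.span_induction generalizing b with
  | mem y hy =>
      obtain ⟨a, ha, m, rfl⟩ := hy
      rw [← mul_smul]
      exact Submodule.subset_span ⟨b * a, mul_mem_iterate p P k hb ha, m, rfl⟩
  | zero => simp
  | add y z hy hz hy' hz' => rw [smul_add]; exact add_mem (hy' hb) (hz' hb)
  | smul r y hy hy' =>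
      rw [← mul_smul]
      have hbr : b * r ∈ (bracketSub p P (Rg p P))^[0 + 1] ⊤ :=
        mul_mem_iterate p P 0 hb (by simp)
      exact hy' (by simpa using hbr)

lemma iterate_le_Tk (k : ℕ) : (bracketSub p P M)^[k] ⊤ ≤ Tk p P M k := by
  induction k with
  | zero =>
      intro x _
      exact Submodule.subset_span ⟨1, by simp, x, (one_smul _ x).symm⟩
  | succ k ih =>
      rw [Function.iterate_succ_apply']
      refine le_trans (bracketSub_mono p P M ih) ?_
      rw [bracketSub, Submodule.span_le]
      rintro x ⟨g, m, hm, rfl⟩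
      have hg : MonoidAlgebra.of (ZMod p) P g - 1 ∈ bracketSub p P (Rg p P) ⊤ :=
        Submodule.subset_span ⟨g, 1, trivial, by simp [smul_eq_mul]⟩
      have := smul_Tk_mem p P M k hm hg
      rwa [sub_smul, one_smul] at this

noncomputable def Nk (k : ℕ) : Submodule (MonoidAlgebra (ZMod p) P) M := (bracketSub p P M)^[k] ⊤

lemma Nk_succ (k : ℕ) : Nk p P M (k + 1) = bracketSub p P M (Nk p P M k) :=
  Function.iterate_succ_apply' _ _ _

lemma Nk_zero : Nk p P M 0 = ⊤ := rfl


/-- Let `P` be a finite `p`-group and `M` a nonzero finite-dimensional `F_p P`-module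
on which `P` acts uniserially.  Then there is an element `a₀` of the group algebra
`F_p P` with `a₀ • M = C_M(P)` and `a₀ • [P, M] = 0`. -/
theorem exists_groupAlgebra_element_range_eq_fixedPts
    (hp : p.Prime) [Finite P] (hP : IsPGroup p P)
    [Module.Finite (ZMod p) M] [Nontrivial M]
    (huni : UniserialFpP p P M) :
    ∃ a₀ : MonoidAlgebra (ZMod p) P,
      Set.range (fun m : M => a₀ • m)
        = {m : M | ∀ g : P, MonoidAlgebra.of (ZMod p) P g • m = m} ∧
      ∀ x ∈ bracketSub p P M (⊤ : Submodule (MonoidAlgebra (ZMod p) P) M),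
        a₀ • x = 0 := by
  classical
  haveI : Fact p.Prime := ⟨hp⟩
  haveI : Finite M := Module.finite_of_finite (ZMod p)
  -- strict descent
  have hstrict : ∀ k, Nk p P M k ≠ ⊥ → Nk p P M (k + 1) < Nk p P M k := by
    intro k hk
    have hle : Nk p P M (k + 1) ≤ Nk p P M k := by
      rw [Nk_succ]; exact bracketSub_le p P M _
    refine lt_of_le_of_ne hle ?_
    intro heq
    have h1 := huni (Nk p P M k) hk
    have h2 : bracketSub p P M (Nk p P M k) = Nk p P M k := by rw [← Nk_succ, heq]
    rw [h2, AddSubgroup.relIndex_self] at h1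
    exact hp.ne_one h1.symm
  -- existence of ℓ with N ℓ = ⊥
  have hex : ∃ k, Nk p P M k = ⊥ := by
    by_contra hno
    push_neg at hno
    set f : ℕ → ℕ := fun k =>
      Module.finrank (ZMod p) (Submodule.restrictScalars (ZMod p) (Nk p P M k)) with hf
    have hdec : ∀ k, f (k + 1) < f k := by
      intro k
      apply Submodule.finrank_lt_finrank_of_lt
      have h := hstrict k (hno k)
      exact lt_of_le_of_ne (fun x hx => h.le hx)
        (fun he => h.ne (Submodule.restrictScalars_injective _ _ _ he))
    have hb : ∀ n, f n + n ≤ f 0 := by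
      intro n
      induction n with
      | zero => omega
      | succ n ih => have := hdec n; omega
    have := hb (f 0 + 1)
    omega
  set ℓ := Nat.find hex with hℓ
  have hl : Nk p P M ℓ = ⊥ := Nat.find_spec hex
  have hl0 : ℓ ≠ 0 := by
    intro h
    rw [h, Nk_zero] at hl
    exact top_ne_bot hl
  have hprev : Nk p P M (ℓ - 1) ≠ ⊥ := Nat.find_min hex (by omega)
  have hsucc : (ℓ - 1) + 1 = ℓ := by omega
  -- extract a₀
  obtain ⟨x, hxT, hx0⟩ :
      ∃ x ∈ {x : M | ∃ a ∈ (bracketSub p P (Rg p P))^[ℓ - 1] ⊤, ∃ m : M, x = a • m},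
        x ≠ 0 := by
    by_contra h
    push_neg at h
    have hT : Tk p P M (ℓ - 1) ≤ ⊥ := by
      rw [Tk, Submodule.span_le]
      intro x hx
      simpa using h x hx
    exact hprev (le_bot_iff.mp ((iterate_le_Tk p P M (ℓ - 1)).trans hT))
  obtain ⟨a₀, ha₀, m₁, rfl⟩ := hxT
  refine ⟨a₀, ?_, ?_⟩
  · -- range equality
    have hNfix : Nk p P M (ℓ - 1) ≤ fixedSub p P M := by
      intro m hm g
      have h1 : MonoidAlgebra.of (ZMod p) P g • m - m ∈ Nk p P M ℓ := by
        rw [← hsucc, Nk_succ]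
        exact Submodule.subset_span ⟨g, m, hm, rfl⟩
      rw [hl, Submodule.mem_bot] at h1
      exact sub_eq_zero.mp h1
    have hfix_ne : fixedSub p P M ≠ ⊥ := by
      obtain ⟨y, hy, hy0⟩ := Submodule.ne_bot_iff _ |>.mp hprev
      exact Submodule.ne_bot_iff _ |>.mpr ⟨y, hNfix hy, hy0⟩
    have hbfix : bracketSub p P M (fixedSub p P M) = ⊥ := by
      rw [bracketSub, ← le_bot_iff, Submodule.span_le]
      rintro x ⟨g, m, hm, rfl⟩
      simp only [SetLike.mem_coe, Submodule.mem_bot, sub_eq_zero]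
      exact hm g
    have hcard : Nat.card (fixedSub p P M).toAddSubgroup = p := by
      have h1 := huni (fixedSub p P M) hfix_ne
      rw [hbfix] at h1
      rw [show (⊥ : Submodule (MonoidAlgebra (ZMod p) P) M).toAddSubgroup = ⊥ from rfl,
        AddSubgroup.relIndex_bot_left] at h1
      exact h1
    set f : M →+ M := AddMonoidHom.mk' (fun m => a₀ • m) (fun x y => smul_add a₀ x y)
      with hfdef
    have hfr : f.range ≤ (fixedSub p P M).toAddSubgroup := by
      rintro x ⟨m, rfl⟩
      have h1 : a₀ • m ∈ Nk p P M ((ℓ - 1) + 0) :=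
        smul_mem_iterate p P M (ℓ - 1) 0 ha₀ Submodule.mem_top
      rw [Nat.add_zero] at h1
      exact hNfix h1
    have hrne : Nat.card f.range ≠ 1 := by
      intro h
      rw [AddSubgroup.card_eq_one] at h
      have hm1 : f m₁ ∈ f.range := ⟨m₁, rfl⟩
      rw [h, AddSubgroup.mem_bot] at hm1
      exact hx0 hm1
    have hrcard : Nat.card f.range = p := by
      have hdvd : Nat.card f.range ∣ p := hcard ▸ AddSubgroup.card_dvd_of_le hfr
      rcases (Nat.Prime.eq_one_or_self_of_dvd hp _ hdvd) with h | h
      · exact absurd h hrne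
      · exact h
    have hset : (f.range : Set M) = ((fixedSub p P M).toAddSubgroup : Set M) := by
      apply Set.eq_of_subset_of_ncard_le hfr ?_ (Set.toFinite _)
      rw [← Nat.card_coe_set_eq, ← Nat.card_coe_set_eq]
      simp only [SetLike.coe_sort_coe]
      rw [hrcard, hcard]
    have hr : Set.range (fun m : M => a₀ • m) = (f.range : Set M) := by
      rw [AddMonoidHom.coe_range]; rfl
    rw [hr, hset]
    rfl
  · -- annihilates [P, M]
    intro x hx
    have h1 : a₀ • x ∈ Nk p P M ((ℓ - 1) + 1) := by
      apply smul_mem_iterate p P M (ℓ - 1) 1 ha₀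
      simpa [Function.iterate_one] using hx
    rw [hsucc, hl, Submodule.mem_bot] at h1
    exact h1
end
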